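/- arXiv:1405.4421 — 8 statements merged into one kernel-verified Lean document; each statement's English description precedes it below -/
import Mathlib

section
/- For any continuous function S : [0,∞) → ℝ, any finite partition 0 = t_0 < t_1 < … < t_K < t_{K+1} = ∞, any t ≥ 0 and u ∈ ℝ, the discrete Tanaka identity holds: ∑_{j=0}^{K} 1_{⦇S(t_j∧t), S(t_{j+1}∧t)⦈}(u) · |S(t_{j+1}∧t) − u| = (S(t) − u)^− − (S(0) − u)^− + ∑_{j=0}^{K} 1_{(−∞,u)}(S(t_j)) · (S(t_{j+1}∧t) − S(t_j∧t)), where ⦇a,b⦈ denotes the half-open interval (a,b] if a ≤ b and (b,a] if a > b, and (x)^− = max(0, −x). -/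
open Set Classical

/-- `⦇a,b⦈` : the half-open interval `(a,b]` if `a ≤ b`, and `(b,a]` otherwise. -/
noncomputable def hook (a b : ℝ) : Set ℝ := if a ≤ b then Set.Ioc a b else Set.Ioc b a

lemma hook_key (a b u : ℝ) :
    (if u ∈ hook a b then |b - u| else 0)
      = max 0 (u - b) - max 0 (u - a) + (if a < u then b - a else 0) := by
  unfold hook
  rcases le_or_gt a b with hab | hab
  · simp only [if_pos hab, Set.mem_Ioc]
    rcases lt_or_ge a u with h1 | h1
    · rcases le_or_gt u b with h2 | h2
      · rw [if_pos ⟨h1, h2⟩, if_pos h1, abs_of_nonneg (by linarith),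
          max_eq_left (by linarith), max_eq_right (by linarith)]
        ring
      · rw [if_neg (by rintro ⟨_, h⟩; linarith), if_pos h1,
          max_eq_right (by linarith), max_eq_right (by linarith)]
        ring
    · rw [if_neg (by rintro ⟨h, _⟩; linarith), if_neg (by linarith),
        max_eq_left (by linarith), max_eq_left (by linarith)]
      ring
  · simp only [if_neg (not_le.mpr hab), Set.mem_Ioc]
    rcases lt_or_ge b u with h2 | h2
    · rcases le_or_gt u a with h1 | h1
      · rw [if_pos ⟨h2, h1⟩, if_neg (by linarith), abs_of_nonpos (by linarith),
          max_eq_right (by linarith), max_eq_left (by linarith)]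
        ring
      · rw [if_neg (by rintro ⟨_, h⟩; linarith), if_pos h1,
          max_eq_right (by linarith), max_eq_right (by linarith)]
        ring
    · rw [if_neg (by rintro ⟨h, _⟩; linarith), if_neg (by linarith),
        max_eq_left (by linarith), max_eq_left (by linarith)]
      ring

/-- Discrete Tanaka identity for a finite partition `0 = t_0 < … < t_K < t_{K+1} = ∞`. -/
theorem discrete_tanaka
    (S : ℝ → ℝ) (hS : Continuous S)
    (K : ℕ) (τ : ℕ → ℝ) (hτ0 : τ 0 = 0) (hmono : ∀ j < K, τ j < τ (j + 1))
    (t : ℝ) (ht : 0 ≤ t) (u : ℝ) :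
    (∑ j ∈ Finset.range (K + 1),
        if u ∈ hook (S (min (τ j) t)) (S (if j < K then min (τ (j + 1)) t else t))
        then |S (if j < K then min (τ (j + 1)) t else t) - u| else 0)
      = max 0 (u - S t) - max 0 (u - S 0)
        + ∑ j ∈ Finset.range (K + 1),
            if S (τ j) < u
            then S (if j < K then min (τ (j + 1)) t else t) - S (min (τ j) t)
            else 0 := by
  set g : ℕ → ℝ := fun j => max 0 (u - S (if j < K + 1 then min (τ j) t else t)) with hg
  have hterm : ∀ j ∈ Finset.range (K + 1),
      (if u ∈ hook (S (min (τ j) t)) (S (if j < K then min (τ (j + 1)) t else t))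
        then |S (if j < K then min (τ (j + 1)) t else t) - u| else 0)
      = (g (j + 1) - g j)
        + (if S (τ j) < u
            then S (if j < K then min (τ (j + 1)) t else t) - S (min (τ j) t)
            else 0) := by
    intro j hj
    rw [Finset.mem_range] at hj
    have hgj : g j = max 0 (u - S (min (τ j) t)) := by simp [hg, hj, show j ≤ K by omega]
    have hgj1 : g (j + 1) = max 0 (u - S (if j < K then min (τ (j + 1)) t else t)) := by
      simp only [hg]
      rcases lt_or_ge j K with h | h
      · rw [if_pos (by omega), if_pos h]
      · rw [if_neg (by omega), if_neg (by omega)]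
    rcases le_or_gt (τ j) t with hjt | hjt
    · rw [min_eq_left hjt] at hgj ⊢
      rw [hgj, hgj1, hook_key]
    · -- τ j > t : everything collapses to S t
      have hmin : min (τ j) t = t := min_eq_right hjt.le
      have hb : (if j < K then min (τ (j + 1)) t else t) = t := by
        rcases lt_or_ge j K with h | h
        · have := hmono j h
          rw [if_pos h, min_eq_right (by linarith)]
        · rw [if_neg (by omega)]
      rw [hmin, hb, hgj, hgj1, hb, hmin]
      simp [hook, Set.Ioc_self]
  rw [Finset.sum_congr rfl hterm, Finset.sum_add_distrib, Finset.sum_range_sub]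
  have hgK : g (K + 1) = max 0 (u - S t) := by simp [hg]
  have hg0 : g 0 = max 0 (u - S 0) := by
    simp [hg, hτ0, min_eq_left ht]
  rw [hgK, hg0]
end

section
/- Let f : ℝ → ℝ be absolutely continuous with right-continuous derivative f′ of locally bounded variation. Then for all real b < a: f(b) − f(a) = f′(a)(b − a) + ∫_{(b,a]} (t − b) df′(t), where the integral is a Lebesgue–Stieltjes integral against df′. -/
open Set MeasureTheory
open scoped ENNReal

lemma stieltjes_fubini_aux (g : StieltjesFunction ℝ) (a b : ℝ) (hab : b ≤ a) :
    ∫ y in Set.Ioc b a, (g a - g y) = ∫ t in Set.Ioc b a, (t - b) ∂g.measure := by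
  have hgm : Measurable g := g.mono.measurable
  -- rewrite LHS as a lintegral
  have h1 : ∫ y in Set.Ioc b a, (g a - g y)
      = (∫⁻ y in Set.Ioc b a, ENNReal.ofReal (g a - g y)).toReal := by
    rw [integral_eq_lintegral_of_nonneg_ae]
    · filter_upwards [ae_restrict_mem measurableSet_Ioc] with y hy
      exact sub_nonneg.2 (g.mono hy.2)
    · exact (measurable_const.sub hgm).aestronglyMeasurable
  have h2 : ∫ t in Set.Ioc b a, (t - b) ∂g.measure
      = (∫⁻ t in Set.Ioc b a, ENNReal.ofReal (t - b) ∂g.measure).toReal := by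
    rw [integral_eq_lintegral_of_nonneg_ae]
    · filter_upwards [ae_restrict_mem measurableSet_Ioc] with t ht
      exact sub_nonneg.2 ht.1.le
    · exact (measurable_id.sub measurable_const).aestronglyMeasurable
  rw [h1, h2]
  congr 1
  -- rewrite the integrand as a measure of an interval
  have h3 : ∫⁻ y in Set.Ioc b a, ENNReal.ofReal (g a - g y)
      = ∫⁻ y in Set.Ioc b a, g.measure (Set.Ioc y a) := by
    refine setLIntegral_congr_fun measurableSet_Ioc (fun y _ => ?_)
    rw [g.measure_Ioc]
  rw [h3]
  -- express as a double lintegral and swap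
  set F : ℝ → ℝ → ℝ≥0∞ :=
    fun y t => Set.indicator {p : ℝ × ℝ | p.1 < p.2 ∧ p.2 ≤ a} (fun _ => 1) (y, t) with hF
  have hFmeas : Measurable (Function.uncurry F) := by
    have hset : MeasurableSet {p : ℝ × ℝ | p.1 < p.2 ∧ p.2 ≤ a} :=
      (measurableSet_lt measurable_fst measurable_snd).inter
        (measurableSet_le measurable_snd measurable_const)
    exact (measurable_const (a := (1:ENNReal))).indicator hset
  have h4 : ∀ y ∈ Set.Ioc b a, g.measure (Set.Ioc y a)
      = ∫⁻ t in Set.Ioc b a, F y t ∂g.measure := by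
    intro y hy
    have : ∀ t, F y t = Set.indicator (Set.Ioc y a) (fun _ => 1) t := by
      intro t
      simp only [hF, Set.indicator, Set.mem_setOf_eq, Set.mem_Ioc]
    simp_rw [this]
    rw [lintegral_indicator measurableSet_Ioc, lintegral_one,
      Measure.restrict_restrict measurableSet_Ioc, Measure.restrict_apply_univ]
    congr 1
    rw [Set.inter_eq_left.2]
    exact Set.Ioc_subset_Ioc hy.1.le le_rfl
  rw [setLIntegral_congr_fun measurableSet_Ioc h4]
  rw [lintegral_lintegral_swap (hFmeas.aemeasurable)]
  refine setLIntegral_congr_fun measurableSet_Ioc (fun t ht => ?_)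
  have h5 : ∀ y, F y t = Set.indicator (Set.Iio t) (fun _ => 1) y := by
    intro y
    simp only [hF, Set.indicator, Set.mem_setOf_eq, Set.mem_Iio, ht.2, and_true]
  simp_rw [h5]
  rw [lintegral_indicator measurableSet_Iio, lintegral_one,
    Measure.restrict_restrict measurableSet_Iio, Measure.restrict_apply_univ]
  have : Set.Iio t ∩ Set.Ioc b a = Set.Ioo b t := by
    ext y
    simp only [Set.mem_inter_iff, Set.mem_Iio, Set.mem_Ioc, Set.mem_Ioo]
    constructor
    · rintro ⟨h1, h2, _⟩; exact ⟨h2, h1⟩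
    · rintro ⟨h1, h2⟩; exact ⟨h2, h1, le_trans h2.le ht.2⟩
  rw [this, Real.volume_Ioo]

/-- Taylor-type identity (decreasing case) for a primitive of a right-continuous function of
locally bounded variation.  Such a function is exactly a difference `f' = g - h` of two
Stieltjes functions, with Stieltjes measure `df' = dg - dh`.  If `f` is the primitive of `f'`,
then for all `b < a`: `f(b) - f(a) = f'(a)(b-a) + ∫_{(b,a]} (t - b) df'(t)`. -/
theorem primitive_eq_linear_add_stieltjes_of_lt
    (g h : StieltjesFunction ℝ) (f' f : ℝ → ℝ)
    (hf' : ∀ x, f' x = g x - h x)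
    (hf : ∀ x, f x = if 0 ≤ x then ∫ y in Set.Ioc 0 x, f' y else -∫ y in Set.Ioc x 0, f' y)
    (a b : ℝ) (hab : b < a) :
    f b - f a = f' a * (b - a) +
      ((∫ t in Set.Ioc b a, (t - b) ∂g.measure) - ∫ t in Set.Ioc b a, (t - b) ∂h.measure) := by
  have hf'eq : f' = fun x => g x - h x := funext hf'
  have hf'int : ∀ c d : ℝ, IntervalIntegrable f' volume c d := by
    intro c d
    rw [hf'eq]
    exact (g.mono.intervalIntegrable).sub (h.mono.intervalIntegrable)
  have key : ∀ x, f x = ∫ y in (0:ℝ)..x, f' y := by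
    intro x
    rw [hf x]
    split_ifs with hx
    · rw [intervalIntegral.integral_of_le hx]
    · rw [intervalIntegral.integral_of_ge (le_of_not_ge hx)]
  have hfab : f a - f b = ∫ y in Set.Ioc b a, f' y := by
    rw [key, key, intervalIntegral.integral_interval_sub_left (hf'int 0 a) (hf'int 0 b),
      intervalIntegral.integral_of_le hab.le]
  have hgi : IntegrableOn (fun y => g a - g y) (Set.Ioc b a) := by
    have := (g.mono.intervalIntegrable (μ := volume) (a := b) (b := a))
    rw [intervalIntegrable_iff_integrableOn_Ioc_of_le hab.le] at this
    exact (integrableOn_const measure_Ioc_lt_top.ne).sub this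
  have hhi : IntegrableOn (fun y => h a - h y) (Set.Ioc b a) := by
    have := (h.mono.intervalIntegrable (μ := volume) (a := b) (b := a))
    rw [intervalIntegrable_iff_integrableOn_Ioc_of_le hab.le] at this
    exact (integrableOn_const measure_Ioc_lt_top.ne).sub this
  have main : ∫ y in Set.Ioc b a, (f' a - f' y)
      = (∫ t in Set.Ioc b a, (t - b) ∂g.measure) - ∫ t in Set.Ioc b a, (t - b) ∂h.measure := by
    have heq : ∀ y, f' a - f' y = (g a - g y) - (h a - h y) := by
      intro y; rw [hf', hf']; ring
    simp_rw [heq]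
    rw [integral_sub hgi hhi, stieltjes_fubini_aux g a b hab.le,
      stieltjes_fubini_aux h a b hab.le]
  have hf'a : ∫ y in Set.Ioc b a, (f' a - f' y)
      = f' a * (a - b) - ∫ y in Set.Ioc b a, f' y := by
    have hint : IntegrableOn f' (Set.Ioc b a) := by
      have := hf'int b a
      rwa [intervalIntegrable_iff_integrableOn_Ioc_of_le hab.le] at this
    rw [integral_sub (integrableOn_const (C := f' a) measure_Ioc_lt_top.ne) hint]
    rw [setIntegral_const, Measure.real, Real.volume_Ioc, ENNReal.toReal_ofReal (by linarith), smul_eq_mul]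
    ring
  rw [hf'a] at main
  have e : f' a * (b - a) = -(f' a * (a - b)) := by ring
  rw [e]
  linarith [main, hfab]
end

section
/- Let S : [0,∞) → ℝ be continuous and let π = {0 = t_0 < t_1 < …} be a partition. Let f : ℝ → ℝ be absolutely continuous with right-continuous derivative f′ of locally bounded variation. Then for every t ≥ 0: f(S(t)) − f(S(0)) = ∑_{t_j ∈ π} f′(S(t_j∧t))(S(t_{j+1}∧t) − S(t_j∧t)) + ∫_ℝ L_t^π(u) df′(u), where L_t^π(u) = ∑_{t_j ∈ π} 1_{⦇S(t_j∧t), S(t_{j+1}∧t)⦈}(u)|S(t_{j+1}∧t) − u| is the discrete local time and the last integral is a Lebesgue–Stieltjes integral against df′. -/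
open Set MeasureTheory Classical

/-- The discrete local time of a path `S` along the partition `τ` at time `t` and level `u`. -/
noncomputable def discreteLocalTime (S : ℝ → ℝ) (τ : ℕ → ℝ) (t u : ℝ) : ℝ :=
  ∑' j : ℕ, if u ∈ hook (S (min (τ j) t)) (S (min (τ (j + 1)) t))
            then |S (min (τ (j + 1)) t) - u| else 0

open ENNReal in
lemma measurableSet_hook (a b : ℝ) : MeasurableSet (hook a b) := by
  unfold hook; split_ifs <;> exact measurableSet_Ioc


open ENNReal in
lemma claimB (g : StieltjesFunction ℝ) {a b : ℝ} (hab : a ≤ b) :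
    ∫ y in Ioc a b, (g y - g a) = ∫ u in Ioc a b, (b - u) ∂g.measure := by
  set μ := g.measure with hμ
  have hgm : Measurable g := g.mono.measurable
  have key : ∫⁻ y in Ioc a b, ENNReal.ofReal (g y - g a)
      = ∫⁻ u in Ioc a b, ENNReal.ofReal (b - u) ∂μ := by
    have hK : Measurable (Function.uncurry fun (y u : ℝ) => if u ≤ y then (1 : ℝ≥0∞) else 0) := by
      have : Function.uncurry (fun (y u : ℝ) => if u ≤ y then (1 : ℝ≥0∞) else 0)
          = Set.indicator {p : ℝ × ℝ | p.2 ≤ p.1} (fun _ => 1) := by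
        ext p; simp [Function.uncurry, Set.indicator_apply]
      rw [this]
      exact (measurable_const.indicator (measurableSet_le measurable_snd measurable_fst))
    calc ∫⁻ y in Ioc a b, ENNReal.ofReal (g y - g a)
        = ∫⁻ y in Ioc a b, μ (Ioc a y) := by
          refine setLIntegral_congr_fun measurableSet_Ioc (fun y hy => ?_)
          rw [g.measure_Ioc]
      _ = ∫⁻ y in Ioc a b, ∫⁻ u in Ioc a b, (if u ≤ y then 1 else 0) ∂μ := by
          refine setLIntegral_congr_fun measurableSet_Ioc (fun y hy => ?_)
          have : ∀ u : ℝ, (if u ≤ y then (1:ℝ≥0∞) else 0) = Set.indicator (Iic y) (fun _ => 1) u := by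
            intro u; simp [Set.indicator_apply]
          simp_rw [this]
          rw [lintegral_indicator measurableSet_Iic, setLIntegral_one,
            Measure.restrict_apply measurableSet_Iic]
          congr 1
          ext u
          simp only [mem_inter_iff, mem_Iic, mem_Ioc]
          constructor
          · rintro ⟨h1, h2⟩; exact ⟨h2, h1, h2.trans hy.2⟩
          · rintro ⟨h1, h2, h3⟩; exact ⟨h2, h1⟩
      _ = ∫⁻ u in Ioc a b, ∫⁻ y in Ioc a b, (if u ≤ y then 1 else 0) ∂(volume) ∂μ :=
          lintegral_lintegral_swap hK.aemeasurable
      _ = ∫⁻ u in Ioc a b, ENNReal.ofReal (b - u) ∂μ := by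
          refine setLIntegral_congr_fun measurableSet_Ioc (fun u hu => ?_)
          have : ∀ y : ℝ, (if u ≤ y then (1:ℝ≥0∞) else 0) = Set.indicator (Ici u) (fun _ => 1) y := by
            intro y; simp [Set.indicator_apply]
          simp_rw [this]
          rw [lintegral_indicator measurableSet_Ici, setLIntegral_one,
            Measure.restrict_apply measurableSet_Ici]
          have : Ici u ∩ Ioc a b = Icc u b := by
            ext y
            simp only [mem_inter_iff, mem_Ici, mem_Ioc, mem_Icc]
            constructor
            · rintro ⟨h1, h2, h3⟩; exact ⟨h1, h3⟩
            · rintro ⟨h1, h2⟩; exact ⟨h1, hu.1.trans_le h1, h2⟩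
          rw [this, Real.volume_Icc]
  rw [integral_eq_lintegral_of_nonneg_ae, integral_eq_lintegral_of_nonneg_ae, key]
  · exact (ae_restrict_iff' measurableSet_Ioc).mpr (ae_of_all _ fun u hu => by simp only [Pi.zero_apply]; linarith [hu.2])
  · exact (measurable_const.sub measurable_id).aestronglyMeasurable
  · exact (ae_restrict_iff' measurableSet_Ioc).mpr (ae_of_all _ fun y hy => by
      have := g.mono hy.1.le; simp only [Pi.zero_apply]; linarith)
  · exact (hgm.sub measurable_const).aestronglyMeasurable

open ENNReal in
lemma claimB' (g : StieltjesFunction ℝ) {a b : ℝ} (hba : b ≤ a) :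
    ∫ y in Ioc b a, (g a - g y) = ∫ u in Ioc b a, (u - b) ∂g.measure := by
  set μ := g.measure with hμ
  have hgm : Measurable g := g.mono.measurable
  have key : ∫⁻ y in Ioc b a, ENNReal.ofReal (g a - g y)
      = ∫⁻ u in Ioc b a, ENNReal.ofReal (u - b) ∂μ := by
    have hK : Measurable (Function.uncurry fun (y u : ℝ) => if y < u then (1 : ℝ≥0∞) else 0) := by
      have : Function.uncurry (fun (y u : ℝ) => if y < u then (1 : ℝ≥0∞) else 0)
          = Set.indicator {p : ℝ × ℝ | p.1 < p.2} (fun _ => 1) := by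
        ext p; simp [Function.uncurry, Set.indicator_apply]
      rw [this]
      exact (measurable_const.indicator (measurableSet_lt measurable_fst measurable_snd))
    calc ∫⁻ y in Ioc b a, ENNReal.ofReal (g a - g y)
        = ∫⁻ y in Ioc b a, μ (Ioc y a) := by
          refine setLIntegral_congr_fun measurableSet_Ioc (fun y hy => ?_)
          rw [g.measure_Ioc]
      _ = ∫⁻ y in Ioc b a, ∫⁻ u in Ioc b a, (if y < u then 1 else 0) ∂μ := by
          refine setLIntegral_congr_fun measurableSet_Ioc (fun y hy => ?_)
          have : ∀ u : ℝ, (if y < u then (1:ℝ≥0∞) else 0) = Set.indicator (Ioi y) (fun _ => 1) u := by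
            intro u; simp [Set.indicator_apply]
          simp_rw [this]
          rw [lintegral_indicator measurableSet_Ioi, setLIntegral_one,
            Measure.restrict_apply measurableSet_Ioi]
          congr 1
          ext u
          simp only [mem_Ioc, mem_inter_iff, mem_Ioi]
          constructor
          · rintro ⟨h1, h2⟩; exact ⟨h1, hy.1.trans h1, h2⟩
          · rintro ⟨h1, h2, h3⟩; exact ⟨h1, h3⟩
      _ = ∫⁻ u in Ioc b a, ∫⁻ y in Ioc b a, (if y < u then 1 else 0) ∂(volume) ∂μ :=
          lintegral_lintegral_swap hK.aemeasurable
      _ = ∫⁻ u in Ioc b a, ENNReal.ofReal (u - b) ∂μ := by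
          refine setLIntegral_congr_fun measurableSet_Ioc (fun u hu => ?_)
          have : ∀ y : ℝ, (if y < u then (1:ℝ≥0∞) else 0) = Set.indicator (Iio u) (fun _ => 1) y := by
            intro y; simp [Set.indicator_apply]
          simp_rw [this]
          rw [lintegral_indicator measurableSet_Iio, setLIntegral_one,
            Measure.restrict_apply measurableSet_Iio]
          have : Iio u ∩ Ioc b a = Ioo b u := by
            ext y
            simp only [mem_inter_iff, mem_Iio, mem_Ioc, mem_Ioo]
            constructor
            · rintro ⟨h1, h2, h3⟩; exact ⟨h2, h1⟩
            · rintro ⟨h1, h2⟩; exact ⟨h2, h1, (le_of_lt h2).trans hu.2⟩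
          rw [this, Real.volume_Ioo]
  rw [integral_eq_lintegral_of_nonneg_ae, integral_eq_lintegral_of_nonneg_ae, key]
  · exact (ae_restrict_iff' measurableSet_Ioc).mpr (ae_of_all _ fun u hu => by
      simp only [Pi.zero_apply]; linarith [hu.1])
  · exact (measurable_id.sub measurable_const).aestronglyMeasurable
  · exact (ae_restrict_iff' measurableSet_Ioc).mpr (ae_of_all _ fun y hy => by
      have := g.mono hy.2; simp only [Pi.zero_apply]; linarith)
  · exact (measurable_const.sub hgm).aestronglyMeasurable

open ENNReal in
lemma step (g h : StieltjesFunction ℝ) (f' f : ℝ → ℝ)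
    (hf' : ∀ x, f' x = g x - h x)
    (hf : ∀ x, f x = if 0 ≤ x then ∫ y in Set.Ioc 0 x, f' y else -∫ y in Set.Ioc x 0, f' y)
    (a b : ℝ) :
    f b - f a = f' a * (b - a)
      + ((∫ u in hook a b, |b - u| ∂g.measure) - ∫ u in hook a b, |b - u| ∂h.measure) := by
  have f'eq : f' = fun x => g x - h x := funext hf'
  have hint : ∀ p q : ℝ, IntervalIntegrable f' volume p q := by
    intro p q; rw [f'eq]
    exact (g.mono.intervalIntegrable).sub (h.mono.intervalIntegrable)
  have hfx : ∀ x, f x = ∫ y in (0:ℝ)..x, f' y := by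
    intro x; rw [hf]
    split_ifs with hx
    · rw [intervalIntegral.integral_of_le hx]
    · rw [intervalIntegral.integral_of_ge (le_of_not_ge hx)]
  have fdiff : f b - f a = ∫ y in a..b, f' y := by
    rw [hfx, hfx]; exact intervalIntegral.integral_interval_sub_left (hint 0 b) (hint 0 a)
  have hconst : ∀ (s : Set ℝ) (c : ℝ), volume s ≠ ⊤ →
      IntegrableOn (fun _ : ℝ => c) s volume :=
    fun s c hs => integrableOn_const hs
  rcases le_or_gt a b with hab | hba
  · have hhook : hook a b = Ioc a b := if_pos hab
    have hvol : volume (Ioc a b) ≠ ⊤ := by rw [Real.volume_Ioc]; exact ofReal_ne_top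
    have hf'int : IntegrableOn f' (Ioc a b) volume :=
      (intervalIntegrable_iff_integrableOn_Ioc_of_le hab).mp (hint a b)
    have hgint : IntegrableOn (fun y => g y - g a) (Ioc a b) volume :=
      ((intervalIntegrable_iff_integrableOn_Ioc_of_le hab).mp g.mono.intervalIntegrable).sub
        (hconst _ _ hvol)
    have hhint : IntegrableOn (fun y => h y - h a) (Ioc a b) volume :=
      ((intervalIntegrable_iff_integrableOn_Ioc_of_le hab).mp h.mono.intervalIntegrable).sub
        (hconst _ _ hvol)
    have e1 : f b - f a = ∫ y in Ioc a b, f' y := by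
      rw [fdiff, intervalIntegral.integral_of_le hab]
    have e2 : ∫ y in Ioc a b, (f' y - f' a) = (∫ y in Ioc a b, f' y) - f' a * (b - a) := by
      rw [integral_sub hf'int (hconst _ _ hvol), setIntegral_const, Real.volume_real_Ioc_of_le (by linarith),
        smul_eq_mul, mul_comm]
    have e3 : ∫ y in Ioc a b, (f' y - f' a)
        = (∫ y in Ioc a b, (g y - g a)) - ∫ y in Ioc a b, (h y - h a) := by
      rw [← integral_sub hgint hhint]
      refine setIntegral_congr_fun measurableSet_Ioc fun y _ => ?_
      simp only [hf']; ring
    have e4 : ∫ u in Ioc a b, (b - u) ∂g.measure = ∫ u in hook a b, |b - u| ∂g.measure := by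
      rw [hhook]
      refine setIntegral_congr_fun measurableSet_Ioc fun u hu => ?_
      rw [abs_of_nonneg (by linarith [hu.2])]
    have e5 : ∫ u in Ioc a b, (b - u) ∂h.measure = ∫ u in hook a b, |b - u| ∂h.measure := by
      rw [hhook]
      refine setIntegral_congr_fun measurableSet_Ioc fun u hu => ?_
      rw [abs_of_nonneg (by linarith [hu.2])]
    rw [e1, ← e4, ← e5, ← claimB g hab, ← claimB h hab]
    linarith [e2, e3]
  · have hhook : hook a b = Ioc b a := if_neg (not_le.mpr hba)
    have hba' : b ≤ a := hba.le
    have hvol : volume (Ioc b a) ≠ ⊤ := by rw [Real.volume_Ioc]; exact ofReal_ne_top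
    have hf'int : IntegrableOn f' (Ioc b a) volume :=
      (intervalIntegrable_iff_integrableOn_Ioc_of_le hba').mp (hint b a)
    have hgint : IntegrableOn (fun y => g a - g y) (Ioc b a) volume :=
      (hconst _ _ hvol).sub
        ((intervalIntegrable_iff_integrableOn_Ioc_of_le hba').mp g.mono.intervalIntegrable)
    have hhint : IntegrableOn (fun y => h a - h y) (Ioc b a) volume :=
      (hconst _ _ hvol).sub
        ((intervalIntegrable_iff_integrableOn_Ioc_of_le hba').mp h.mono.intervalIntegrable)
    have e1 : f b - f a = -∫ y in Ioc b a, f' y := by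
      rw [fdiff, intervalIntegral.integral_of_ge hba']
    have e2 : ∫ y in Ioc b a, (f' a - f' y) = f' a * (a - b) - ∫ y in Ioc b a, f' y := by
      rw [integral_sub (hconst _ _ hvol) hf'int, setIntegral_const, Real.volume_real_Ioc_of_le (by linarith),
        smul_eq_mul, mul_comm]
    have e3 : ∫ y in Ioc b a, (f' a - f' y)
        = (∫ y in Ioc b a, (g a - g y)) - ∫ y in Ioc b a, (h a - h y) := by
      rw [← integral_sub hgint hhint]
      refine setIntegral_congr_fun measurableSet_Ioc fun y _ => ?_
      simp only [hf']; ring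
    have e4 : ∫ u in Ioc b a, (u - b) ∂g.measure = ∫ u in hook a b, |b - u| ∂g.measure := by
      rw [hhook]
      refine setIntegral_congr_fun measurableSet_Ioc fun u hu => ?_
      rw [abs_sub_comm, abs_of_nonneg (by linarith [hu.1])]
    have e5 : ∫ u in Ioc b a, (u - b) ∂h.measure = ∫ u in hook a b, |b - u| ∂h.measure := by
      rw [hhook]
      refine setIntegral_congr_fun measurableSet_Ioc fun u hu => ?_
      rw [abs_sub_comm, abs_of_nonneg (by linarith [hu.1])]
    rw [e1, ← e4, ← e5, ← claimB' g hba', ← claimB' h hba']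
    linarith [e2, e3]

open ENNReal in
lemma main_aux (g h : StieltjesFunction ℝ) (f' f : ℝ → ℝ)
    (hf' : ∀ x, f' x = g x - h x)
    (hf : ∀ x, f x = if 0 ≤ x then ∫ y in Set.Ioc 0 x, f' y else -∫ y in Set.Ioc x 0, f' y)
    (a : ℕ → ℝ) (N : ℕ) (haN : ∀ j, N ≤ j → a j = a N) :
    f (a N) - f (a 0)
      = (∑' j : ℕ, f' (a j) * (a (j + 1) - a j))
        + ((∫ u, (∑' j : ℕ, if u ∈ hook (a j) (a (j + 1)) then |a (j + 1) - u| else 0) ∂g.measure)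
            - ∫ u, (∑' j : ℕ, if u ∈ hook (a j) (a (j + 1)) then |a (j + 1) - u| else 0) ∂h.measure) := by
  have haeq : ∀ j, N ≤ j → a j = a N ∧ a (j + 1) = a N :=
    fun j hj => ⟨haN j hj, haN _ (hj.trans (Nat.le_succ j))⟩
  have hmain : (∑' j : ℕ, f' (a j) * (a (j + 1) - a j))
      = ∑ j ∈ Finset.range N, f' (a j) * (a (j + 1) - a j) := by
    refine tsum_eq_sum fun j hj => ?_
    obtain ⟨e1, e2⟩ := haeq j (Nat.le_of_not_lt (by simpa using hj))
    rw [e1, e2, sub_self, mul_zero]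
  have hlt : ∀ u, (∑' j : ℕ, if u ∈ hook (a j) (a (j + 1)) then |a (j + 1) - u| else 0)
      = ∑ j ∈ Finset.range N, (if u ∈ hook (a j) (a (j + 1)) then |a (j + 1) - u| else 0) := by
    intro u
    refine tsum_eq_sum fun j hj => ?_
    obtain ⟨e1, e2⟩ := haeq j (Nat.le_of_not_lt (by simpa using hj))
    rw [e1, e2]
    simp [hook, Set.Ioc_self]
  have hint : ∀ (μ : Measure ℝ) [IsLocallyFiniteMeasure μ] (j : ℕ),
      Integrable (fun u => if u ∈ hook (a j) (a (j + 1)) then |a (j + 1) - u| else 0) μ := by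
    intro μ _ j
    have heq : (fun u => if u ∈ hook (a j) (a (j + 1)) then |a (j + 1) - u| else 0)
        = (hook (a j) (a (j + 1))).indicator (fun u => |a (j + 1) - u|) := by
      ext u; simp [Set.indicator_apply]
    rw [heq]
    refine IntegrableOn.integrable_indicator ?_ (measurableSet_hook _ _)
    have hc : Continuous fun u : ℝ => |a (j + 1) - u| := (continuous_const.sub continuous_id).abs
    unfold hook; split_ifs
    · exact hc.integrableOn_Ioc
    · exact hc.integrableOn_Ioc
  have hI : ∀ (μ : Measure ℝ) [IsLocallyFiniteMeasure μ],
      ∫ u, (∑' j : ℕ, if u ∈ hook (a j) (a (j + 1)) then |a (j + 1) - u| else 0) ∂μ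
        = ∑ j ∈ Finset.range N, ∫ u in hook (a j) (a (j + 1)), |a (j + 1) - u| ∂μ := by
    intro μ _
    rw [integral_congr_ae (ae_of_all _ hlt), integral_finset_sum _ (fun j _ => hint μ j)]
    refine Finset.sum_congr rfl fun j _ => ?_
    have heq : (fun u => if u ∈ hook (a j) (a (j + 1)) then |a (j + 1) - u| else 0)
        = (hook (a j) (a (j + 1))).indicator (fun u => |a (j + 1) - u|) := by
      ext u; simp [Set.indicator_apply]
    rw [heq, integral_indicator (measurableSet_hook _ _)]
  calc f (a N) - f (a 0)
      = ∑ j ∈ Finset.range N, (f (a (j + 1)) - f (a j)) := (Finset.sum_range_sub (fun j => f (a j)) N).symm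
    _ = ∑ j ∈ Finset.range N, (f' (a j) * (a (j + 1) - a j)
          + ((∫ u in hook (a j) (a (j + 1)), |a (j + 1) - u| ∂g.measure)
              - ∫ u in hook (a j) (a (j + 1)), |a (j + 1) - u| ∂h.measure)) :=
        Finset.sum_congr rfl fun j _ => step g h f' f hf' hf (a j) (a (j + 1))
    _ = _ := by
        rw [Finset.sum_add_distrib, Finset.sum_sub_distrib, hmain, hI g.measure, hI h.measure]

/-- Exact discrete Itô–Tanaka identity along an infinite partition: for `f` absolutely
continuous with right-continuous derivative `f' = g - h` of locally bounded variation
(`g, h` Stieltjes functions, so that `df' = dg - dh`),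
`f(S(t)) - f(S(0)) = ∑_j f'(S(t_j∧t))(S(t_{j+1}∧t) - S(t_j∧t)) + ∫ L_t^π(u) df'(u)`. -/
theorem discrete_ito_tanaka
    (S : ℝ → ℝ) (hS : Continuous S)
    (τ : ℕ → ℝ) (hτ0 : τ 0 = 0) (hτmono : StrictMono τ)
    (hτtop : Filter.Tendsto τ Filter.atTop Filter.atTop)
    (g h : StieltjesFunction ℝ) (f' f : ℝ → ℝ)
    (hf' : ∀ x, f' x = g x - h x)
    (hf : ∀ x, f x = if 0 ≤ x then ∫ y in Set.Ioc 0 x, f' y else -∫ y in Set.Ioc x 0, f' y)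
    (t : ℝ) (ht : 0 ≤ t) :
    f (S t) - f (S 0)
      = (∑' j : ℕ, f' (S (min (τ j) t)) * (S (min (τ (j + 1)) t) - S (min (τ j) t)))
        + ((∫ u, discreteLocalTime S τ t u ∂g.measure)
            - ∫ u, discreteLocalTime S τ t u ∂h.measure) := by
  classical
  obtain ⟨N, hN⟩ := Filter.eventually_atTop.mp (hτtop.eventually_ge_atTop t)
  have key := main_aux g h f' f hf' hf (fun j => S (min (τ j) t)) N
    (fun j hj => by
      rw [min_eq_right (hN j hj), min_eq_right (hN N le_rfl)])
  rw [min_eq_right (hN N le_rfl)] at key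
  rw [hτ0, min_eq_left ht] at key
  unfold discreteLocalTime
  exact key
end

section
/- Under the hypotheses of the pathwise generalized Itô formula with continuous local time (S continuous with discrete local times along (π^n) converging uniformly to a jointly continuous limit L), the pathwise Tanaka–Meyer formula holds: for all t ≥ 0 and u ∈ ℝ, L_t(u) = (S(t) − u)^− − (S(0) − u)^− + ∫_0^t 1_{(−∞,u)}(S(s)) dS(s), where the integral is the limit of Riemann sums ∑_{t_j ∈ π^n} 1_{(−∞,u)}(S(t_j))(S(t_{j+1}∧t) − S(t_j∧t)). -/
open Set Filter Classical

lemma tanaka_step (a b u : ℝ) :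
    (if u ∈ hook a b then |b - u| else 0) =
      (max 0 (u - b) - max 0 (u - a)) + (if a < u then (1:ℝ) else 0) * (b - a) := by
  unfold hook
  rcases le_total (u - a) 0 with ha | ha <;> rcases le_total (u - b) 0 with hb | hb <;>
    split_ifs <;>
    simp_all [Set.mem_Ioc, abs_of_nonneg, abs_of_nonpos, max_eq_left, max_eq_right,
      sub_nonneg, sub_nonpos] <;>
    linarith

/-- Pathwise Tanaka–Meyer formula: if the discrete local times along `(π^n)` converge
uniformly (in `u`, for each `t`) to a jointly continuous limit `L`, then for all `t ≥ 0`
and `u ∈ ℝ` the Riemann sums `∑_j 1_{(-∞,u)}(S(t_j))(S(t_{j+1}∧t) - S(t_j∧t))` converge to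
a limit `I = ∫_0^t 1_{(-∞,u)}(S(s)) dS(s)` and
`L_t(u) = (S(t)-u)⁻ - (S(0)-u)⁻ + I`, where `(x)⁻ = max(0,-x)`. -/
theorem pathwise_tanaka_meyer
    (S : ℝ → ℝ) (hS : Continuous S)
    (π : ℕ → ℕ → ℝ)
    (hπ0 : ∀ n, π n 0 = 0) (hπmono : ∀ n, StrictMono (π n))
    (hπtop : ∀ n, Tendsto (π n) atTop atTop)
    (hmesh : ∀ t : ℝ, 0 ≤ t →
      Tendsto (fun n => ⨆ j : ℕ, |S (min (π n (j + 1)) t) - S (min (π n j) t)|)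
        atTop (nhds 0))
    (L : ℝ → ℝ → ℝ)
    (hLconv : ∀ t : ℝ, 0 ≤ t →
      TendstoUniformly (fun n u => discreteLocalTime S (π n) t u) (L t) atTop)
    (hLcont : Continuous fun p : ℝ × ℝ => L p.1 p.2)
    (t : ℝ) (ht : 0 ≤ t) (u : ℝ) :
    ∃ I : ℝ,
      Tendsto (fun n =>
          ∑' j : ℕ, (if S (min (π n j) t) < u then (1 : ℝ) else 0)
            * (S (min (π n (j + 1)) t) - S (min (π n j) t)))
        atTop (nhds I) ∧
      L t u = max 0 (u - S t) - max 0 (u - S 0) + I := by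
  have key : ∀ n,
      (∑' j : ℕ, (if S (min (π n j) t) < u then (1 : ℝ) else 0)
          * (S (min (π n (j + 1)) t) - S (min (π n j) t)))
        = discreteLocalTime S (π n) t u - max 0 (u - S t) + max 0 (u - S 0) := by
    intro n
    obtain ⟨N, hN⟩ := eventually_atTop.mp ((hπtop n).eventually_ge_atTop t)
    set f : ℕ → ℝ := fun j => S (min (π n j) t) with hf
    have hft : ∀ j, N ≤ j → f j = S t := by
      intro j hj
      simp only [hf, min_eq_right (hN j hj)]
    have hR : ∀ j ∉ Finset.range N,
        (if f j < u then (1 : ℝ) else 0) * (f (j + 1) - f j) = 0 := by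
      intro j hj
      rw [Finset.mem_range, not_lt] at hj
      rw [hft j hj, hft (j + 1) (hj.trans (Nat.le_succ j))]
      simp
    have hD : ∀ j ∉ Finset.range N,
        (if u ∈ hook (f j) (f (j + 1)) then |f (j + 1) - u| else 0) = 0 := by
      intro j hj
      rw [Finset.mem_range, not_lt] at hj
      rw [hft j hj, hft (j + 1) (hj.trans (Nat.le_succ j))]
      simp [hook]
    have hDLT : discreteLocalTime S (π n) t u
        = ∑ j ∈ Finset.range N,
            (if u ∈ hook (f j) (f (j + 1)) then |f (j + 1) - u| else 0) :=
      tsum_eq_sum hD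
    have hRS : (∑' j : ℕ, (if f j < u then (1 : ℝ) else 0) * (f (j + 1) - f j))
        = ∑ j ∈ Finset.range N, (if f j < u then (1 : ℝ) else 0) * (f (j + 1) - f j) :=
      tsum_eq_sum hR
    have htel : ∑ j ∈ Finset.range N,
        (max 0 (u - f (j + 1)) - max 0 (u - f j)) = max 0 (u - f N) - max 0 (u - f 0) :=
      Finset.sum_range_sub (fun j => max 0 (u - f j)) N
    have hfN : f N = S t := hft N le_rfl
    have hf0 : f 0 = S 0 := by simp [hf, hπ0 n, min_eq_left ht]
    calc (∑' j : ℕ, (if f j < u then (1 : ℝ) else 0) * (f (j + 1) - f j))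
        = ∑ j ∈ Finset.range N, (if f j < u then (1 : ℝ) else 0) * (f (j + 1) - f j) := hRS
      _ = ∑ j ∈ Finset.range N,
            ((if u ∈ hook (f j) (f (j + 1)) then |f (j + 1) - u| else 0)
              - (max 0 (u - f (j + 1)) - max 0 (u - f j))) := by
            refine Finset.sum_congr rfl fun j _ => ?_
            rw [tanaka_step (f j) (f (j + 1)) u]; ring
      _ = (∑ j ∈ Finset.range N,
            (if u ∈ hook (f j) (f (j + 1)) then |f (j + 1) - u| else 0))
          - ∑ j ∈ Finset.range N, (max 0 (u - f (j + 1)) - max 0 (u - f j)) :=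
            Finset.sum_sub_distrib _ _
      _ = discreteLocalTime S (π n) t u - max 0 (u - S t) + max 0 (u - S 0) := by
            rw [hDLT, htel, hfN, hf0]; ring
  refine ⟨L t u - max 0 (u - S t) + max 0 (u - S 0), ?_, by ring⟩
  have h1 : Tendsto (fun n => discreteLocalTime S (π n) t u) atTop (nhds (L t u)) :=
    (hLconv t ht).tendsto_at u
  have h2 := (h1.sub_const (max 0 (u - S t))).add_const (max 0 (u - S 0))
  exact h2.congr fun n => (key n).symm
end

section
/- If f_n : ℝ → ℝ is a sequence of functions with uniformly bounded p-variation (sup_n ‖f_n‖_{p-var} ≤ M < ∞ for some p ≥ 1) converging uniformly to f, then for every p′ > p the sequence f_n converges to f in p′-variation, i.e. ‖f_n − f‖_{p′-var} → 0. -/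
open Filter ENNReal

/-- The `p`-variation (semi)norm of `g : ℝ → ℝ`, valued in `ℝ≥0∞`:
the supremum over all finite increasing sequences `u_0 < … < u_n` of
`(∑_k |g(u_k) - g(u_{k-1})|^p)^{1/p}`. -/
noncomputable def pVar (p : ℝ) (g : ℝ → ℝ) : ℝ≥0∞ :=
  ⨆ (n : ℕ) (u : ℕ → ℝ) (_ : ∀ k < n, u k < u (k + 1)),
    (∑ k ∈ Finset.range n, (ENNReal.ofReal |g (u (k + 1)) - g (u k)|) ^ p) ^ (1 / p)

private lemma sum_le_pVar_pow {p : ℝ} (hp : 0 < p) (g : ℝ → ℝ) (m : ℕ) (u : ℕ → ℝ)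
    (hu : ∀ k < m, u k < u (k + 1)) :
    ∑ k ∈ Finset.range m, (ENNReal.ofReal |g (u (k + 1)) - g (u k)|) ^ p ≤ (pVar p g) ^ p := by
  have h1 : (∑ k ∈ Finset.range m, (ENNReal.ofReal |g (u (k + 1)) - g (u k)|) ^ p) ^ (1 / p)
      ≤ pVar p g := by
    unfold pVar
    exact le_iSup_of_le m (le_iSup_of_le u (le_iSup_of_le hu le_rfl))
  calc ∑ k ∈ Finset.range m, (ENNReal.ofReal |g (u (k + 1)) - g (u k)|) ^ p
      = ((∑ k ∈ Finset.range m, (ENNReal.ofReal |g (u (k + 1)) - g (u k)|) ^ p) ^ (1 / p)) ^ p := by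
        rw [← ENNReal.rpow_mul, one_div, inv_mul_cancel₀ hp.ne', ENNReal.rpow_one]
    _ ≤ (pVar p g) ^ p := ENNReal.rpow_le_rpow h1 hp.le

private lemma add_rpow_le {p : ℝ} (hp : 0 ≤ p) (a b : ℝ≥0∞) :
    (a + b) ^ p ≤ (2 : ℝ≥0∞) ^ p * (a ^ p + b ^ p) := by
  have h1 : a + b ≤ 2 * (a ⊔ b) := by
    rw [two_mul]
    exact add_le_add le_sup_left le_sup_right
  calc (a + b) ^ p ≤ (2 * (a ⊔ b)) ^ p := ENNReal.rpow_le_rpow h1 hp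
    _ = (2 : ℝ≥0∞) ^ p * (a ⊔ b) ^ p := ENNReal.mul_rpow_of_nonneg _ _ hp
    _ ≤ (2 : ℝ≥0∞) ^ p * (a ^ p + b ^ p) := by
        gcongr
        rcases le_total a b with h | h
        · rw [sup_eq_right.mpr h]; exact le_add_self
        · rw [sup_eq_left.mpr h]; exact le_self_add

/-- If `f_n → f` uniformly with uniformly bounded `p`-variation, then `f_n → f` in
`p'`-variation for every `p' > p`. -/
theorem tendsto_pVar_of_uniform
    (p : ℝ) (hp : 1 ≤ p) (f : ℕ → ℝ → ℝ) (flim : ℝ → ℝ) (M : ℝ)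
    (hbdd : ∀ n, pVar p (f n) ≤ ENNReal.ofReal M)
    (hconv : TendstoUniformly f flim atTop) :
    ∀ p' : ℝ, p < p' →
      Tendsto (fun n => pVar p' (fun x => f n x - flim x)) atTop (nhds 0) := by
  have hp0 : (0:ℝ) < p := lt_of_lt_of_le one_pos hp
  -- sums for f n are bounded
  have hA : ∀ n (m : ℕ) (u : ℕ → ℝ), (∀ k < m, u k < u (k + 1)) →
      ∑ k ∈ Finset.range m, (ENNReal.ofReal |f n (u (k + 1)) - f n (u k)|) ^ p
        ≤ (ENNReal.ofReal M) ^ p := fun n m u hu =>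
    (sum_le_pVar_pow hp0 (f n) m u hu).trans (ENNReal.rpow_le_rpow (hbdd n) hp0.le)
  -- sums for flim are bounded (pointwise limit)
  have hB : ∀ (m : ℕ) (u : ℕ → ℝ), (∀ k < m, u k < u (k + 1)) →
      ∑ k ∈ Finset.range m, (ENNReal.ofReal |flim (u (k + 1)) - flim (u k)|) ^ p
        ≤ (ENNReal.ofReal M) ^ p := by
    intro m u hu
    have hlim : Tendsto
        (fun n => ∑ k ∈ Finset.range m, (ENNReal.ofReal |f n (u (k + 1)) - f n (u k)|) ^ p)
        atTop
        (nhds (∑ k ∈ Finset.range m, (ENNReal.ofReal |flim (u (k + 1)) - flim (u k)|) ^ p)) := by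
      refine tendsto_finset_sum _ fun k _ => ?_
      have h1 : Tendsto (fun n => |f n (u (k + 1)) - f n (u k)|) atTop
          (nhds |flim (u (k + 1)) - flim (u k)|) :=
        ((hconv.tendsto_at (u (k + 1))).sub (hconv.tendsto_at (u k))).abs
      exact (ENNReal.continuous_rpow_const.tendsto _).comp (ENNReal.tendsto_ofReal h1)
    exact le_of_tendsto hlim (Eventually.of_forall fun n => hA n m u hu)
  -- the constant
  set C : ℝ≥0∞ := (2 : ℝ≥0∞) ^ p * ((ENNReal.ofReal M) ^ p + (ENNReal.ofReal M) ^ p) with hC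
  have hCtop : C ≠ ⊤ := by
    apply ENNReal.mul_ne_top
    · exact (ENNReal.rpow_lt_top_of_nonneg hp0.le (by simp)).ne
    · exact (ENNReal.add_lt_top.mpr
        ⟨ENNReal.rpow_lt_top_of_nonneg hp0.le ENNReal.ofReal_ne_top,
         ENNReal.rpow_lt_top_of_nonneg hp0.le ENNReal.ofReal_ne_top⟩).ne
  -- sums for f n - flim are bounded by C
  have hD : ∀ n (m : ℕ) (u : ℕ → ℝ), (∀ k < m, u k < u (k + 1)) →
      ∑ k ∈ Finset.range m,
        (ENNReal.ofReal |(f n (u (k + 1)) - flim (u (k + 1))) - (f n (u k) - flim (u k))|) ^ p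
        ≤ C := by
    intro n m u hu
    calc ∑ k ∈ Finset.range m,
        (ENNReal.ofReal |(f n (u (k + 1)) - flim (u (k + 1))) - (f n (u k) - flim (u k))|) ^ p
        ≤ ∑ k ∈ Finset.range m, (2:ℝ≥0∞) ^ p *
            ((ENNReal.ofReal |f n (u (k + 1)) - f n (u k)|) ^ p
              + (ENNReal.ofReal |flim (u (k + 1)) - flim (u k)|) ^ p) := by
          refine Finset.sum_le_sum fun k _ => ?_
          have habs : |(f n (u (k + 1)) - flim (u (k + 1))) - (f n (u k) - flim (u k))|
              ≤ |f n (u (k + 1)) - f n (u k)| + |flim (u (k + 1)) - flim (u k)| := by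
            have : (f n (u (k + 1)) - flim (u (k + 1))) - (f n (u k) - flim (u k))
                = (f n (u (k + 1)) - f n (u k)) - (flim (u (k + 1)) - flim (u k)) := by ring
            rw [this]
            exact abs_sub _ _
          have h2 : ENNReal.ofReal |(f n (u (k + 1)) - flim (u (k + 1))) - (f n (u k) - flim (u k))|
              ≤ ENNReal.ofReal |f n (u (k + 1)) - f n (u k)|
                + ENNReal.ofReal |flim (u (k + 1)) - flim (u k)| :=
            (ENNReal.ofReal_le_ofReal habs).trans (ENNReal.ofReal_add_le)
          exact (ENNReal.rpow_le_rpow h2 hp0.le).trans (add_rpow_le hp0.le _ _)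
      _ = (2:ℝ≥0∞) ^ p *
            ((∑ k ∈ Finset.range m, (ENNReal.ofReal |f n (u (k + 1)) - f n (u k)|) ^ p)
              + ∑ k ∈ Finset.range m, (ENNReal.ofReal |flim (u (k + 1)) - flim (u k)|) ^ p) := by
          rw [← Finset.mul_sum, Finset.sum_add_distrib]
      _ ≤ C := by
          rw [hC]
          gcongr
          · exact hA n m u hu
          · exact hB m u hu
  intro p' hpp'
  have hp'0 : (0:ℝ) < p' := hp0.trans hpp'
  have hδ : (0:ℝ) < p' - p := by linarith
  rw [ENNReal.tendsto_nhds_zero]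
  intro ε hε
  -- find t > 0 with the bound ≤ ε
  set h : ℝ → ℝ≥0∞ := fun t => ((ENNReal.ofReal (2*t)) ^ (p' - p) * C) ^ (1/p') with hh
  have hh0 : Tendsto h (nhds 0) (nhds 0) := by
    have h1 : Tendsto (fun t : ℝ => ENNReal.ofReal (2*t)) (nhds 0) (nhds 0) := by
      have := ENNReal.tendsto_ofReal (m := fun t : ℝ => 2*t) (a := 0)
        (by simpa using (tendsto_id (α := ℝ) (x := nhds 0)).const_mul 2)
      simpa using this
    have h2 : Tendsto (fun t : ℝ => (ENNReal.ofReal (2*t)) ^ (p' - p)) (nhds 0) (nhds 0) := by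
      have := (ENNReal.continuous_rpow_const (y := p' - p)).tendsto 0
      rw [ENNReal.zero_rpow_of_pos hδ] at this
      exact this.comp h1
    have h3 : Tendsto (fun t : ℝ => (ENNReal.ofReal (2*t)) ^ (p' - p) * C) (nhds 0) (nhds 0) := by
      simpa using ENNReal.Tendsto.mul_const h2 (Or.inr hCtop)
    have h4 := (ENNReal.continuous_rpow_const (y := 1/p')).tendsto 0
    rw [ENNReal.zero_rpow_of_pos (by positivity)] at h4
    exact h4.comp h3
  have hex : ∃ t : ℝ, 0 < t ∧ h t ≤ ε := by
    have h5 : ∀ᶠ t in nhdsWithin (0:ℝ) (Set.Ioi 0), h t ≤ ε :=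
      (hh0.mono_left nhdsWithin_le_nhds).eventually_le_const hε
    exact (h5.and self_mem_nhdsWithin).exists.imp fun t ht => ⟨ht.2, ht.1⟩
  obtain ⟨t, ht0, htε⟩ := hex
  have hev : ∀ᶠ n in atTop, ∀ x, dist (flim x) (f n x) < t :=
    (Metric.tendstoUniformly_iff.mp hconv) t ht0
  filter_upwards [hev] with n hn
  -- bound pVar p' of the difference
  refine le_trans ?_ htε
  rw [hh]
  unfold pVar
  refine iSup_le fun m => iSup_le fun u => iSup_le fun hu => ?_
  refine ENNReal.rpow_le_rpow ?_ (by positivity)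
  calc ∑ k ∈ Finset.range m,
      (ENNReal.ofReal |(fun x => f n x - flim x) (u (k + 1)) - (fun x => f n x - flim x) (u k)|) ^ p'
      ≤ ∑ k ∈ Finset.range m, (ENNReal.ofReal (2*t)) ^ (p' - p) *
          (ENNReal.ofReal |(f n (u (k + 1)) - flim (u (k + 1))) - (f n (u k) - flim (u k))|) ^ p := by
        refine Finset.sum_le_sum fun k _ => ?_
        simp only
        set a : ℝ≥0∞ :=
          ENNReal.ofReal |(f n (u (k + 1)) - flim (u (k + 1))) - (f n (u k) - flim (u k))| with ha
        have hale : a ≤ ENNReal.ofReal (2*t) := by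
          rw [ha]
          refine ENNReal.ofReal_le_ofReal ?_
          have h1 : |f n (u (k + 1)) - flim (u (k + 1))| < t := by
            rw [abs_sub_comm]; exact (Real.dist_eq _ _) ▸ hn (u (k + 1))
          have h2 : |f n (u k) - flim (u k)| < t := by
            rw [abs_sub_comm]; exact (Real.dist_eq _ _) ▸ hn (u k)
          calc |(f n (u (k + 1)) - flim (u (k + 1))) - (f n (u k) - flim (u k))|
              ≤ |f n (u (k + 1)) - flim (u (k + 1))| + |f n (u k) - flim (u k)| := abs_sub _ _
            _ ≤ 2 * t := by linarith
        rcases eq_or_ne a 0 with h0 | h0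
        · rw [h0, ENNReal.zero_rpow_of_pos hp'0]
          exact zero_le
        · have hat : a ≠ ⊤ := by rw [ha]; exact ENNReal.ofReal_ne_top
          have : a ^ p' = a ^ (p' - p) * a ^ p := by
            rw [← ENNReal.rpow_add _ _ h0 hat, sub_add_cancel]
          rw [this]
          exact mul_le_mul_left (ENNReal.rpow_le_rpow hale hδ.le) _
    _ = (ENNReal.ofReal (2*t)) ^ (p' - p) * ∑ k ∈ Finset.range m,
          (ENNReal.ofReal |(f n (u (k + 1)) - flim (u (k + 1))) - (f n (u k) - flim (u k))|) ^ p :=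
        (Finset.mul_sum _ _ _).symm
    _ ≤ (ENNReal.ofReal (2*t)) ^ (p' - p) * C := mul_le_mul_right (hD n m u hu) _
end

section
/- Let a_n be real numbers with sup over u of |I^n(u) − I^{n−1}(u)| ≤ C·2^{−nα} for all n ≥ 1 and sup over |u−v| ≤ 2^{−n} of |I^n(v) − I^n(u)| ≤ C·2^{−nα} for all n, where each I^n : ℝ → ℝ is constant on dyadic intervals of length 2^{−n} and α ∈ (0,1). Then there exists a constant C′ (depending only on C and α) such that for all n and all u, v with 2^{−n} ≤ |u − v| ≤ 1 one has |I^n(v) − I^n(u)| ≤ C′ |v − u|^α. Consequently sup_n ‖I^n‖_{(1/α)-var, [−K,K]} < ∞ for every K > 0. -/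
set_option maxHeartbeats 1000000

open Filter ENNReal

/-- The `p`-variation of `g` on the interval `[a,b]`, valued in `ℝ≥0∞`. -/
noncomputable def pVarOn (p : ℝ) (g : ℝ → ℝ) (a b : ℝ) : ℝ≥0∞ :=
  ⨆ (n : ℕ) (u : ℕ → ℝ) (_ : ∀ k < n, u k < u (k + 1)) (_ : ∀ k ≤ n, u k ∈ Set.Icc a b),
    (∑ k ∈ Finset.range n, (ENNReal.ofReal |g (u (k + 1)) - g (u k)|) ^ p) ^ (1 / p)

/-- `g` is constant on all dyadic intervals `[k2^{-n}, (k+1)2^{-n})`. -/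
def DyadicStep (n : ℕ) (g : ℝ → ℝ) : Prop :=
  ∀ k : ℤ, ∀ u ∈ Set.Ico ((k : ℝ) * 2 ^ (-(n : ℝ))) (((k : ℝ) + 1) * 2 ^ (-(n : ℝ))),
    ∀ v ∈ Set.Ico ((k : ℝ) * 2 ^ (-(n : ℝ))) (((k : ℝ) + 1) * 2 ^ (-(n : ℝ))), g u = g v

/-- From the telescoping estimates on dyadic step approximations one gets a uniform Hölder-type
bound at all scales, and hence a uniform bound on the `(1/α)`-variation on compacts. -/
theorem dyadic_holder_and_variation_bound
    (C α : ℝ) (hC : 0 < C) (hα : α ∈ Set.Ioo (0 : ℝ) 1)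
    (I : ℕ → ℝ → ℝ)
    (hstep : ∀ n, DyadicStep n (I n))
    (h1 : ∀ n : ℕ, 1 ≤ n → ∀ u : ℝ,
      |I n u - I (n - 1) u| ≤ C * 2 ^ (-(n : ℝ) * α))
    (h2 : ∀ n : ℕ, ∀ u v : ℝ, |u - v| ≤ 2 ^ (-(n : ℝ)) →
      |I n v - I n u| ≤ C * 2 ^ (-(n : ℝ) * α)) :
    ∃ C' : ℝ, 0 < C' ∧
      (∀ n : ℕ, ∀ u v : ℝ, 2 ^ (-(n : ℝ)) ≤ |u - v| → |u - v| ≤ 1 →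
        |I n v - I n u| ≤ C' * |v - u| ^ α) ∧
      (∀ K : ℝ, 0 < K → ⨆ n : ℕ, pVarOn (1 / α) (I n) (-K) K < ⊤) := by
  classical
  obtain ⟨hα0, hα1⟩ := hα
  set r : ℝ := 2 ^ (-α) with hr_def
  have hr0 : 0 < r := Real.rpow_pos_of_pos two_pos _
  have hr1 : r < 1 := Real.rpow_lt_one_of_one_lt_of_neg one_lt_two (by linarith)
  have h1r : 0 < 1 - r := by linarith
  have hpow : ∀ j : ℕ, (2:ℝ) ^ (-(j:ℝ) * α) = r ^ j := by
    intro j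
    rw [hr_def, ← Real.rpow_natCast (2 ^ (-α) : ℝ) j, ← Real.rpow_mul (by norm_num)]
    ring_nf
  have geom : ∀ k : ℕ, ∑ i ∈ Finset.range k, r ^ i ≤ (1 - r)⁻¹ := by
    intro k
    rw [geom_sum_eq (ne_of_lt hr1) k, show (r ^ k - 1) / (r - 1) = (1 - r ^ k) / (1 - r) by
      rw [← neg_div_neg_eq]; ring_nf]
    rw [div_le_iff₀ h1r, inv_mul_cancel₀ (ne_of_gt h1r)]
    have := pow_nonneg hr0.le k
    linarith
  -- telescoping estimate
  have tele : ∀ m n : ℕ, m ≤ n → ∀ u : ℝ,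
      |I n u - I m u| ≤ C * r ^ (m + 1) * (1 - r)⁻¹ := by
    intro m n hmn u
    have key : I n u - I m u
        = ∑ i ∈ Finset.range (n - m), (I (m + i + 1) u - I (m + i) u) := by
      have h := Finset.sum_range_sub (fun i => I (m + i) u) (n - m)
      simp only [Nat.add_sub_cancel' hmn, Nat.add_zero] at h
      rw [← h]
      exact Finset.sum_congr rfl fun i _ => by ring_nf
    rw [key]
    calc |∑ i ∈ Finset.range (n - m), (I (m + i + 1) u - I (m + i) u)|
        ≤ ∑ i ∈ Finset.range (n - m), |I (m + i + 1) u - I (m + i) u| :=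
          Finset.abs_sum_le_sum_abs _ _
      _ ≤ ∑ i ∈ Finset.range (n - m), C * r ^ (m + 1) * r ^ i := by
          apply Finset.sum_le_sum
          intro i _
          have := h1 (m + i + 1) (by omega) u
          simp only [Nat.add_sub_cancel] at this
          rw [hpow (m + i + 1)] at this
          calc |I (m + i + 1) u - I (m + i) u| ≤ C * r ^ (m + i + 1) := this
            _ = C * r ^ (m + 1) * r ^ i := by ring
      _ = C * r ^ (m + 1) * ∑ i ∈ Finset.range (n - m), r ^ i := by
          rw [← Finset.mul_sum]
      _ ≤ C * r ^ (m + 1) * (1 - r)⁻¹ := by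
          apply mul_le_mul_of_nonneg_left (geom _)
          positivity
  -- dyadic step property
  have δpos : ∀ n : ℕ, (0:ℝ) < 2 ^ (-(n:ℝ)) := fun n => Real.rpow_pos_of_pos two_pos _
  have stepEq : ∀ n : ℕ, ∀ u : ℝ,
      I n u = I n (⌊u / 2 ^ (-(n:ℝ))⌋ * 2 ^ (-(n:ℝ))) := by
    intro n u
    set δ := (2:ℝ) ^ (-(n:ℝ)) with hδ_def
    have hδ : 0 < δ := δpos n
    have h₁ : (⌊u/δ⌋ : ℝ) * δ ≤ u := by
      rw [← le_div_iff₀ hδ]; exact Int.floor_le _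
    have h₂ : u < ((⌊u/δ⌋ : ℝ) + 1) * δ := by
      rw [← div_lt_iff₀ hδ]; exact Int.lt_floor_add_one _
    exact hstep n ⌊u/δ⌋ u ⟨h₁, h₂⟩ _ ⟨le_refl _, by nlinarith⟩
  -- Hölder-type bound at all scales
  set C₂ : ℝ := 2 * C * (1 - r)⁻¹ + C with hC₂_def
  have hC₂ : 0 < C₂ := by positivity
  have holder : ∀ n : ℕ, ∀ u v : ℝ, 2 ^ (-(n:ℝ)) ≤ |u - v| → |u - v| ≤ 1 →
      |I n v - I n u| ≤ (2 * C₂) * |v - u| ^ α := by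
    intro n u v hlo hhi
    set d := |u - v| with hd_def
    have hd0 : 0 < d := lt_of_lt_of_le (Real.rpow_pos_of_pos two_pos _) hlo
    set P : ℕ → Prop := fun j => d ≤ 2 ^ (-(j:ℝ)) with hP_def
    have hP0 : P 0 := by simpa [hP_def] using hhi
    set m : ℕ := Nat.findGreatest P n with hm_def
    have hPm : P m := Nat.findGreatest_spec (Nat.zero_le n) hP0
    have hmn : m ≤ n := Nat.findGreatest_le n
    have h2m : (2:ℝ) ^ (-(m:ℝ)) ≤ 2 * d := by
      rcases eq_or_lt_of_le hmn with he | hlt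
      · calc (2:ℝ) ^ (-(m:ℝ)) = 2 ^ (-(n:ℝ)) := by rw [he]
          _ ≤ d := hlo
          _ ≤ 2 * d := by linarith
      · have hnot : ¬ P (m + 1) :=
          Nat.findGreatest_is_greatest (Nat.lt_succ_self m) hlt
        have hlt2 : (2:ℝ) ^ (-((m:ℝ) + 1)) < d := by
          have hnot' : ¬ d ≤ (2:ℝ) ^ (-(((m + 1 : ℕ)) : ℝ)) := hnot
          push_cast at hnot'
          exact lt_of_not_ge hnot'
        have : (2:ℝ) ^ (-(m:ℝ)) = 2 * 2 ^ (-((m:ℝ) + 1)) := by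
          rw [show -((m:ℝ) + 1) = (-(m:ℝ)) + (-1) by ring,
            Real.rpow_add two_pos, Real.rpow_neg_one]
          ring
        rw [this]; linarith
    have t1 := tele m n hmn v
    have t3 := tele m n hmn u
    have t2 : |I m v - I m u| ≤ C * r ^ m := by
      have := h2 m u v hPm
      rwa [hpow m] at this
    have hrm : (0:ℝ) ≤ r ^ m := by positivity
    have step1 : |I n v - I n u| ≤ C₂ * r ^ m := by
      have habs : |I n v - I n u| ≤
          |I n v - I m v| + |I m v - I m u| + |I n u - I m u| := by
        have := abs_sub_comm (I m u) (I n u)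
        calc |I n v - I n u|
            = |(I n v - I m v) + (I m v - I m u) + (I m u - I n u)| := by ring_nf
          _ ≤ |I n v - I m v| + |I m v - I m u| + |I m u - I n u| := by
              exact (abs_add_three _ _ _)
          _ = |I n v - I m v| + |I m v - I m u| + |I n u - I m u| := by rw [this]
      have hps : r ^ (m + 1) = r ^ m * r := pow_succ r m
      have hinv : (0:ℝ) ≤ (1 - r)⁻¹ := by positivity
      have hrr : r ^ m * r ≤ r ^ m := by nlinarith
      have hb : C * r ^ (m+1) * (1-r)⁻¹ ≤ C * (1-r)⁻¹ * r ^ m := by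
        rw [hps, show C * (r ^ m * r) * (1-r)⁻¹ = (C * (1-r)⁻¹) * (r ^ m * r) by ring,
          show C * (1-r)⁻¹ * r ^ m = (C * (1-r)⁻¹) * r ^ m by ring]
        exact mul_le_mul_of_nonneg_left hrr (by positivity)
      calc |I n v - I n u| ≤ |I n v - I m v| + |I m v - I m u| + |I n u - I m u| := habs
        _ ≤ C * r ^ (m+1) * (1-r)⁻¹ + C * r ^ m + C * r ^ (m+1) * (1-r)⁻¹ := by
            linarith
        _ ≤ C₂ * r ^ m := by rw [hC₂_def]; nlinarith
    have hrm2 : r ^ m ≤ 2 * d ^ α := by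
      have e1 : r ^ m = ((2:ℝ) ^ (-(m:ℝ))) ^ α := by
        rw [← hpow m, show (-(m:ℝ) * α) = (-(m:ℝ)) * α by ring, Real.rpow_mul (by norm_num)]
      have e2 : ((2:ℝ) ^ (-(m:ℝ))) ^ α ≤ (2 * d) ^ α :=
        Real.rpow_le_rpow (Real.rpow_pos_of_pos two_pos _).le h2m hα0.le
      have e3 : ((2:ℝ) * d) ^ α = 2 ^ α * d ^ α := Real.mul_rpow (by norm_num) hd0.le
      have e4 : (2:ℝ) ^ α ≤ 2 := by
        calc (2:ℝ) ^ α ≤ (2:ℝ) ^ (1:ℝ) :=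
          Real.rpow_le_rpow_of_exponent_le one_le_two hα1.le
          _ = 2 := Real.rpow_one 2
      have hdα : (0:ℝ) ≤ d ^ α := Real.rpow_nonneg hd0.le α
      calc r ^ m = ((2:ℝ) ^ (-(m:ℝ))) ^ α := e1
        _ ≤ (2 * d) ^ α := e2
        _ = 2 ^ α * d ^ α := e3
        _ ≤ 2 * d ^ α := by nlinarith
    calc |I n v - I n u| ≤ C₂ * r ^ m := step1
      _ ≤ C₂ * (2 * d ^ α) := mul_le_mul_of_nonneg_left hrm2 hC₂.le
      _ = (2 * C₂) * |v - u| ^ α := by rw [hd_def, abs_sub_comm]; ring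
  -- large-gap bound by chaining at scale one
  set C₆ : ℝ := 2 * C * (1 - r)⁻¹ + 2 * C with hC₆_def
  have hC₆ : 0 < C₆ := by positivity
  have large : ∀ n : ℕ, ∀ u v : ℝ, 1 ≤ v - u → |I n v - I n u| ≤ C₆ * (v - u) := by
    intro n u v hd
    set d := v - u with hd_def
    have hd0 : 0 < d := by linarith
    set m : ℕ := ⌈d⌉₊ with hm_def
    have hm0 : 0 < m := Nat.ceil_pos.mpr hd0
    have hdm : d ≤ m := Nat.le_ceil d
    have hm2d : (m:ℝ) ≤ 2 * d := by
      have := Nat.ceil_lt_add_one hd0.le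
      have : (m:ℝ) < d + 1 := this
      linarith
    set s := d / m with hs_def
    have hmpos : (0:ℝ) < m := by exact_mod_cast hm0
    have hs1 : s ≤ 1 := by rw [hs_def, div_le_one hmpos]; exact hdm
    have hs0 : 0 ≤ s := by positivity
    have hone : (2:ℝ) ^ (-((0:ℕ):ℝ)) = 1 := by norm_num
    have honeα : C * (2:ℝ) ^ (-((0:ℕ):ℝ) * α) = C := by norm_num
    have hms : u + (m:ℝ) * s = v := by
      rw [hs_def, mul_div_cancel₀ _ (ne_of_gt hmpos)]; rw [hd_def]; ring
    have chain : |I 0 v - I 0 u| ≤ C * m := by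
      have key : I 0 v - I 0 u
          = ∑ i ∈ Finset.range m, (I 0 (u + ((i:ℝ)+1)*s) - I 0 (u + (i:ℝ)*s)) := by
        have h := Finset.sum_range_sub (fun i : ℕ => I 0 (u + (i:ℝ)*s)) m
        push_cast at h
        simp only [zero_mul, add_zero] at h
        rw [hms] at h
        exact h.symm
      rw [key]
      calc |∑ i ∈ Finset.range m, (I 0 (u + (↑i+1)*s) - I 0 (u + ↑i*s))|
          ≤ ∑ i ∈ Finset.range m, |I 0 (u + (↑i+1)*s) - I 0 (u + ↑i*s)| :=
            Finset.abs_sum_le_sum_abs _ _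
        _ ≤ ∑ _i ∈ Finset.range m, C := by
            apply Finset.sum_le_sum
            intro i _
            have habs : |(u + (i:ℝ)*s) - (u + ((i:ℝ)+1)*s)| ≤ 2 ^ (-((0:ℕ):ℝ)) := by
              rw [hone, show (u + (i:ℝ)*s) - (u + ((i:ℝ)+1)*s) = -s by ring, abs_neg,
                abs_of_nonneg hs0]
              exact hs1
            have := h2 0 (u + (i:ℝ)*s) (u + ((i:ℝ)+1)*s) habs
            rwa [honeα] at this
        _ = C * m := by simp [mul_comm]
    have t1 := tele 0 n (Nat.zero_le n) v
    have t3 := tele 0 n (Nat.zero_le n) u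
    have habs : |I n v - I n u| ≤ |I n v - I 0 v| + |I 0 v - I 0 u| + |I n u - I 0 u| := by
      have hc := abs_sub_comm (I 0 u) (I n u)
      calc |I n v - I n u| = |(I n v - I 0 v) + (I 0 v - I 0 u) + (I 0 u - I n u)| := by ring_nf
        _ ≤ |I n v - I 0 v| + |I 0 v - I 0 u| + |I 0 u - I n u| := abs_add_three _ _ _
        _ = _ := by rw [hc]
    have hb : C * r ^ (0 + 1) * (1 - r)⁻¹ ≤ C * (1 - r)⁻¹ := by
      rw [pow_succ, pow_zero, one_mul]
      nlinarith [mul_nonneg hC.le (le_of_lt (inv_pos.mpr h1r)), inv_pos.mpr h1r]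
    have hCm : C * (m:ℝ) ≤ 2 * C * d := by nlinarith
    have hfin : 2 * (C * (1 - r)⁻¹) ≤ 2 * C * (1 - r)⁻¹ * d := by
      nlinarith [mul_nonneg (mul_nonneg (by linarith : (0:ℝ) ≤ 2 * C)
        (le_of_lt (inv_pos.mpr h1r))) (by linarith : (0:ℝ) ≤ d - 1)]
    calc |I n v - I n u| ≤ |I n v - I 0 v| + |I 0 v - I 0 u| + |I n u - I 0 u| := habs
      _ ≤ C * (1 - r)⁻¹ + C * m + C * (1 - r)⁻¹ := by linarith
      _ ≤ C₆ * d := by rw [hC₆_def]; nlinarith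
  -- conclusion
  refine ⟨2 * C₂, by positivity, holder, ?_⟩
  intro K hK
  set T : ℝ := 2 * K + 1 with hT_def
  have hT1 : 1 ≤ T := by linarith
  have hT0 : 0 < T := by linarith
  have hC' : (0:ℝ) < 2 * C₂ := by positivity
  set M : ℝ := (2 * C₂) ^ (1/α) + C₆ ^ (1/α) * T ^ (1/α - 1) with hM_def
  have hp1 : (1:ℝ) ≤ 1/α := by
    rw [le_div_iff₀ hα0]; linarith
  have hMa : 0 ≤ (2 * C₂) ^ (1/α) := Real.rpow_nonneg hC'.le _
  have hMb : 0 ≤ C₆ ^ (1/α) * T ^ (1/α - 1) := by positivity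
  have hM0 : 0 ≤ M := by rw [hM_def]; linarith
  set S : ℝ := M * T with hS_def
  refine lt_of_le_of_lt (iSup_le fun n => ?_)
    (ENNReal.rpow_lt_top_of_nonneg (by positivity) ENNReal.ofReal_ne_top :
      (ENNReal.ofReal S) ^ (1 / (1/α)) < ⊤)
  rw [pVarOn]
  refine iSup_le fun N => iSup_le fun u => iSup_le fun hinc => iSup_le fun hmem => ?_
  refine ENNReal.rpow_le_rpow ?_ (by positivity)
  have habs : ∀ k, (0:ℝ) ≤ |I n (u (k+1)) - I n (u k)| ^ (1/α) :=
    fun k => Real.rpow_nonneg (abs_nonneg _) _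
  calc ∑ k ∈ Finset.range N, (ENNReal.ofReal |I n (u (k + 1)) - I n (u k)|) ^ (1/α)
      = ∑ k ∈ Finset.range N, ENNReal.ofReal (|I n (u (k + 1)) - I n (u k)| ^ (1/α)) := by
        refine Finset.sum_congr rfl fun k _ => ?_
        exact ENNReal.ofReal_rpow_of_nonneg (abs_nonneg _) (by positivity)
    _ = ENNReal.ofReal (∑ k ∈ Finset.range N, |I n (u (k + 1)) - I n (u k)| ^ (1/α)) :=
        (ENNReal.ofReal_sum_of_nonneg fun k _ => habs k).symm
    _ ≤ ENNReal.ofReal S := by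
        apply ENNReal.ofReal_le_ofReal
        set δ : ℝ := 2 ^ (-(n:ℝ)) with hδ_def
        have hδ : 0 < δ := δpos n
        have hδ1 : δ ≤ 1 := by
          rw [hδ_def]
          calc (2:ℝ) ^ (-(n:ℝ)) ≤ 2 ^ (0:ℝ) :=
            Real.rpow_le_rpow_of_exponent_le one_le_two (by simp)
            _ = 1 := Real.rpow_zero 2
        set w : ℕ → ℝ := fun k => (⌊u k / δ⌋ : ℝ) * δ with hw_def
        have hIw : ∀ k, I n (u k) = I n (w k) := fun k => stepEq n (u k)
        have hwle : ∀ k, w k ≤ u k := by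
          intro k
          rw [hw_def]
          calc (⌊u k / δ⌋ : ℝ) * δ ≤ (u k / δ) * δ :=
            mul_le_mul_of_nonneg_right (Int.floor_le _) hδ.le
            _ = u k := div_mul_cancel₀ _ (ne_of_gt hδ)
        have hwgt : ∀ k, u k - δ < w k := by
          intro k
          rw [hw_def]
          have := Int.lt_floor_add_one (u k / δ)
          have h2' : u k / δ * δ < ((⌊u k / δ⌋ : ℝ) + 1) * δ :=
            mul_lt_mul_of_pos_right this hδ
          rw [div_mul_cancel₀ _ (ne_of_gt hδ)] at h2'
          nlinarith
        have hwmono : ∀ k, k < N → w k ≤ w (k+1) := by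
          intro k hk
          rw [hw_def]
          have : u k ≤ u (k+1) := (hinc k hk).le
          have hfl : (⌊u k / δ⌋ : ℤ) ≤ ⌊u (k+1) / δ⌋ :=
            Int.floor_le_floor (by gcongr)
          exact mul_le_mul_of_nonneg_right (by exact_mod_cast hfl) hδ.le
        have per : ∀ k ∈ Finset.range N,
            |I n (u (k+1)) - I n (u k)| ^ (1/α) ≤ M * (w (k+1) - w k) := by
          intro k hk
          rw [Finset.mem_range] at hk
          have ht0 : 0 ≤ w (k+1) - w k := by linarith [hwmono k hk]
          have hDeq : |I n (u (k+1)) - I n (u k)| = |I n (w (k+1)) - I n (w k)| := by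
            rw [hIw k, hIw (k+1)]
          rcases eq_or_lt_of_le ht0 with hteq | htpos
          · rw [hDeq, show w (k+1) = w k by linarith, sub_self, abs_zero,
              Real.zero_rpow (by positivity : (1:ℝ)/α ≠ 0)]
            nlinarith
          · have hint : w (k+1) - w k = ((⌊u (k+1)/δ⌋ - ⌊u k/δ⌋ : ℤ) : ℝ) * δ := by
              rw [hw_def]; push_cast; ring
            have hq : (1:ℤ) ≤ ⌊u (k+1)/δ⌋ - ⌊u k/δ⌋ := by
              by_contra hcon
              push_neg at hcon
              have : (⌊u (k+1)/δ⌋ - ⌊u k/δ⌋ : ℤ) ≤ 0 := by omega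
              have : ((⌊u (k+1)/δ⌋ - ⌊u k/δ⌋ : ℤ) : ℝ) ≤ 0 := by exact_mod_cast this
              nlinarith [hint]
            have htδ : δ ≤ w (k+1) - w k := by
              rw [hint]
              have : (1:ℝ) ≤ ((⌊u (k+1)/δ⌋ - ⌊u k/δ⌋ : ℤ) : ℝ) := by exact_mod_cast hq
              nlinarith
            have htT : w (k+1) - w k ≤ T := by
              have hmem1 := hmem (k+1) hk
              have hmem2 := hmem k (le_of_lt hk)
              rw [Set.mem_Icc] at hmem1 hmem2
              have ha := hwle (k+1)
              have hb := hwgt k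
              rw [hT_def]; nlinarith
            set t := w (k+1) - w k with ht_def
            rcases le_or_gt t 1 with hcase | hcase
            · have hhyp1 : 2 ^ (-(n:ℝ)) ≤ |w k - w (k+1)| := by
                rw [abs_sub_comm, abs_of_nonneg ht0]; exact htδ
              have hhyp2 : |w k - w (k+1)| ≤ 1 := by
                rw [abs_sub_comm, abs_of_nonneg ht0]; exact hcase
              have hh := holder n (w k) (w (k+1)) hhyp1 hhyp2
              rw [abs_of_nonneg ht0] at hh
              rw [hDeq]
              calc |I n (w (k+1)) - I n (w k)| ^ (1/α) ≤ ((2 * C₂) * t ^ α) ^ (1/α) :=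
                Real.rpow_le_rpow (abs_nonneg _) hh (by positivity)
                _ = (2 * C₂) ^ (1/α) * (t ^ α) ^ (1/α) :=
                  Real.mul_rpow hC'.le (Real.rpow_nonneg ht0 _)
                _ = (2 * C₂) ^ (1/α) * t := by
                  rw [← Real.rpow_mul ht0, mul_one_div_cancel (ne_of_gt hα0), Real.rpow_one]
                _ ≤ M * t := by
                  apply mul_le_mul_of_nonneg_right _ ht0
                  rw [hM_def]; linarith
            · have hh := large n (w k) (w (k+1)) (by linarith)
              rw [hDeq]
              have htpos' : (0:ℝ) < t := by linarith
              calc |I n (w (k+1)) - I n (w k)| ^ (1/α) ≤ (C₆ * t) ^ (1/α) :=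
                Real.rpow_le_rpow (abs_nonneg _) hh (by positivity)
                _ = C₆ ^ (1/α) * t ^ (1/α) := Real.mul_rpow hC₆.le htpos'.le
                _ = C₆ ^ (1/α) * (t ^ (1/α - 1) * t) := by
                  rw [← Real.rpow_add_one (ne_of_gt htpos'), sub_add_cancel]
                _ ≤ C₆ ^ (1/α) * (T ^ (1/α - 1) * t) := by
                  apply mul_le_mul_of_nonneg_left _ (Real.rpow_nonneg hC₆.le _)
                  apply mul_le_mul_of_nonneg_right _ htpos'.le
                  exact Real.rpow_le_rpow htpos'.le htT (by linarith)
                _ = (C₆ ^ (1/α) * T ^ (1/α - 1)) * t := by ring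
                _ ≤ M * t := by
                  apply mul_le_mul_of_nonneg_right _ ht0
                  rw [hM_def]; linarith
        calc ∑ k ∈ Finset.range N, |I n (u (k + 1)) - I n (u k)| ^ (1/α)
            ≤ ∑ k ∈ Finset.range N, M * (w (k+1) - w k) := Finset.sum_le_sum per
          _ = M * (w N - w 0) := by rw [← Finset.mul_sum, Finset.sum_range_sub]
          _ ≤ M * T := by
              apply mul_le_mul_of_nonneg_left _ hM0
              have hmem1 := hmem N le_rfl
              have hmem2 := hmem 0 (Nat.zero_le N)
              rw [Set.mem_Icc] at hmem1 hmem2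
              have ha := hwle N
              have hb := hwgt 0
              rw [hT_def]; nlinarith
          _ = S := hS_def.symm
end

section
/- A function f : ℝ → ℝ is absolutely continuous on compacts with a right-continuous Radon–Nikodym derivative f′ of locally bounded variation if and only if f is the difference of two convex functions. -/
open Set MeasureTheory ENNReal

/-! ### Auxiliary lemmas -/

lemma sum_edist_le_pVarOn (g : ℝ → ℝ) (a b : ℝ) :
    ∀ n : ℕ, ∀ u : ℕ → ℝ, Monotone u → (∀ i, u i ∈ Set.Icc a b) →
      ∑ i ∈ Finset.range n, edist (g (u (i + 1))) (g (u i)) ≤ pVarOn 1 g a b := by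
  intro n
  induction n using Nat.strong_induction_on with
  | _ n IH =>
    intro u hu hmem
    by_cases hstrict : ∀ k < n, u k < u (k + 1)
    · have heq : ∑ i ∈ Finset.range n, edist (g (u (i + 1))) (g (u i))
          = (∑ k ∈ Finset.range n,
              (ENNReal.ofReal |g (u (k + 1)) - g (u k)|) ^ (1 : ℝ)) ^ (1 / (1 : ℝ)) := by
        simp [edist_dist, Real.dist_eq]
      rw [heq, pVarOn]
      exact le_iSup_of_le n (le_iSup_of_le u (le_iSup_of_le hstrict
        (le_iSup_of_le (fun k _ => hmem k) le_rfl)))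
    · push_neg at hstrict
      obtain ⟨k, hk, hk2⟩ := hstrict
      have hkeq : u k = u (k + 1) := le_antisymm (hu (Nat.le_succ k)) hk2
      match n, hk with
      | m + 1, hk =>
      have hkm : k ≤ m := Nat.lt_succ_iff.mp hk
      set T : ℕ → ℝ≥0∞ := fun i => edist (g (u (i + 1))) (g (u i)) with hT
      -- skip the index `k`
      set σ : ℕ → ℕ := fun i => if i ≤ k then i else i + 1 with hσ
      have hσmono : Monotone σ := by
        intro i j hij
        simp only [hσ]
        split_ifs <;> omega
      set u' : ℕ → ℝ := u ∘ σ with hu'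
      have hu'mono : Monotone u' := hu.comp hσmono
      have hu'mem : ∀ i, u' i ∈ Set.Icc a b := fun i => hmem (σ i)
      have hT' : ∀ i, edist (g (u' (i + 1))) (g (u' i)) = if i < k then T i else T (i + 1) := by
        intro i
        rcases lt_trichotomy i k with h | h | h
        · have h1 : σ i = i := if_pos h.le
          have h2 : σ (i + 1) = i + 1 := if_pos h
          simp [hu', h1, h2, if_pos h, hT]
        · subst h
          have h1 : σ i = i := if_pos le_rfl
          have h2 : σ (i + 1) = i + 2 := if_neg (by omega)
          simp only [hu', Function.comp_apply, h1, h2, if_neg (lt_irrefl i), hT, hkeq]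
        · have h1 : σ i = i + 1 := if_neg (by omega)
          have h2 : σ (i + 1) = i + 2 := if_neg (by omega)
          simp [hu', h1, h2, if_neg (by omega : ¬ i < k), hT]
      have hTk : T k = 0 := by simp [hT, hkeq]
      have hsum : ∑ i ∈ Finset.range (m + 1), T i
          = ∑ i ∈ Finset.range m, edist (g (u' (i + 1))) (g (u' i)) := by
        calc ∑ i ∈ Finset.range (m + 1), T i
            = ∑ i ∈ Finset.Ico 0 k, T i + ∑ i ∈ Finset.Ico k (m + 1), T i := by
              rw [Finset.range_eq_Ico, ← Finset.sum_Ico_consecutive _ (Nat.zero_le k)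
                (by omega : k ≤ m + 1)]
          _ = ∑ i ∈ Finset.Ico 0 k, T i + ∑ i ∈ Finset.Ico (k + 1) (m + 1), T i := by
              rw [Finset.sum_eq_sum_Ico_succ_bot (by omega : k < m + 1), hTk, zero_add]
          _ = ∑ i ∈ Finset.Ico 0 k, T i + ∑ i ∈ Finset.Ico k m, T (i + 1) := by
              rw [Finset.sum_Ico_add' T k m 1]
          _ = ∑ i ∈ Finset.Ico 0 k, (if i < k then T i else T (i + 1))
              + ∑ i ∈ Finset.Ico k m, (if i < k then T i else T (i + 1)) := by
              congr 1
              · exact Finset.sum_congr rfl fun i hi =>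
                  (if_pos (Finset.mem_Ico.1 hi).2).symm
              · exact Finset.sum_congr rfl fun i hi =>
                  (if_neg (not_lt.2 (Finset.mem_Ico.1 hi).1)).symm
          _ = ∑ i ∈ Finset.range m, (if i < k then T i else T (i + 1)) := by
              rw [Finset.range_eq_Ico,
                ← Finset.sum_Ico_consecutive _ (Nat.zero_le k) hkm]
          _ = ∑ i ∈ Finset.range m, edist (g (u' (i + 1))) (g (u' i)) :=
              Finset.sum_congr rfl fun i _ => (hT' i).symm
      calc ∑ i ∈ Finset.range (m + 1), edist (g (u (i + 1))) (g (u i))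
          = ∑ i ∈ Finset.range m, edist (g (u' (i + 1))) (g (u' i)) := hsum
        _ ≤ pVarOn 1 g a b := IH m (Nat.lt_succ_self m) u' hu'mono hu'mem

lemma lbv_of_pVar {f' : ℝ → ℝ} (hf : ∀ a b : ℝ, a < b → pVarOn 1 f' a b < ⊤) :
    LocallyBoundedVariationOn f' Set.univ := by
  intro a b _ _
  rw [Set.univ_inter]
  rcases lt_or_ge a b with hab | hba
  · have hle : eVariationOn f' (Set.Icc a b) ≤ pVarOn 1 f' a b := by
      apply iSup_le
      rintro ⟨n, ⟨u, hu, hus⟩⟩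
      exact sum_edist_le_pVarOn f' a b n u hu hus
    exact ne_top_of_le_ne_top (hf a b hab).ne hle
  · have hs : (Set.Icc a b).Subsingleton := fun x hx y hy =>
      le_antisymm (hx.2.trans (hba.trans hy.1)) (hy.2.trans (hba.trans hx.1))
    simp [BoundedVariationOn, eVariationOn.subsingleton f' hs]

lemma convexOn_integral_of_monotone {p : ℝ → ℝ} (hp : Monotone p) :
    ConvexOn ℝ Set.univ (fun x => ∫ t in (0:ℝ)..x, p t) := by
  apply convexOn_of_slope_mono_adjacent convex_univ
  intro x y z _ _ hxy hyz
  have hint : ∀ u v : ℝ, IntervalIntegrable p volume u v := fun u v => hp.intervalIntegrable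
  have h1 : (∫ t in (0:ℝ)..y, p t) - ∫ t in (0:ℝ)..x, p t = ∫ t in x..y, p t :=
    intervalIntegral.integral_interval_sub_left (hint 0 y) (hint 0 x)
  have h2 : (∫ t in (0:ℝ)..z, p t) - ∫ t in (0:ℝ)..y, p t = ∫ t in y..z, p t :=
    intervalIntegral.integral_interval_sub_left (hint 0 z) (hint 0 y)
  have hup : ∫ t in x..y, p t ≤ (y - x) * p y := by
    calc ∫ t in x..y, p t ≤ ∫ _t in x..y, p y :=
          intervalIntegral.integral_mono_on hxy.le (hint x y) intervalIntegrable_const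
            fun t ht => hp ht.2
      _ = (y - x) * p y := by simp [smul_eq_mul]
  have hlow : (z - y) * p y ≤ ∫ t in y..z, p t := by
    calc (z - y) * p y = ∫ _t in y..z, p y := by simp [smul_eq_mul]
      _ ≤ ∫ t in y..z, p t :=
          intervalIntegral.integral_mono_on hyz.le intervalIntegrable_const (hint y z)
            fun t ht => hp ht.1
  rw [h1, h2]
  have hyx : (0:ℝ) < y - x := by linarith
  have hzy : (0:ℝ) < z - y := by linarith
  calc (∫ t in x..y, p t) / (y - x) ≤ p y := by
        rw [div_le_iff₀ hyx]; linarith [hup]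
    _ ≤ (∫ t in y..z, p t) / (z - y) := by
        rw [le_div_iff₀ hzy]; linarith [hlow]

/-! ### Right derivative of a convex function -/

noncomputable def rder (g : ℝ → ℝ) (x : ℝ) : ℝ := sInf (slope g x '' Set.Ioi x)

section rder

variable {g : ℝ → ℝ}

lemma slope_mono3 (hg : ConvexOn ℝ Set.univ g) {x y z : ℝ} (hxy : x < y) (hyz : y < z) : slope g x y ≤ slope g y z := by
  rw [slope_def_field, slope_def_field]
  exact hg.slope_mono_adjacent (Set.mem_univ x) (Set.mem_univ z) hxy hyz

lemma secant2 (hg : ConvexOn ℝ Set.univ g) {a x y : ℝ} (hxa : x ≠ a) (hya : y ≠ a) (hxy : x ≤ y) :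
    slope g a x ≤ slope g a y := by
  rw [slope_def_field, slope_def_field]
  exact hg.secant_mono (Set.mem_univ a) (Set.mem_univ x) (Set.mem_univ y) hxa hya hxy

lemma monotoneOn_slope (hg : ConvexOn ℝ Set.univ g) (x : ℝ) : MonotoneOn (slope g x) (Set.Ioi x) :=
  fun _u hu _v hv huv => secant2 hg (ne_of_gt hu) (ne_of_gt hv) huv

lemma bddBelow_slope (hg : ConvexOn ℝ Set.univ g) (x : ℝ) : BddBelow (slope g x '' Set.Ioi x) := by
  refine ⟨slope g x (x - 1), ?_⟩
  rintro _ ⟨y, hy, rfl⟩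
  rw [slope_comm g x (x - 1)]
  exact slope_mono3 hg (by linarith) hy

lemma hasRightDeriv (hg : ConvexOn ℝ Set.univ g) (x : ℝ) : HasDerivWithinAt g (rder g x) (Set.Ioi x) x := by
  rw [hasDerivWithinAt_iff_tendsto_slope]
  have hd : Set.Ioi x \ {x} = Set.Ioi x :=
    Set.diff_singleton_eq_self (by simp)
  rw [hd]
  exact (monotoneOn_slope hg x).tendsto_nhdsGT (bddBelow_slope hg x)

lemma rder_le_slope (hg : ConvexOn ℝ Set.univ g) {x y : ℝ} (hxy : x < y) : rder g x ≤ slope g x y :=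
  csInf_le (bddBelow_slope hg x) ⟨y, hxy, rfl⟩

lemma slope_le_rder (hg : ConvexOn ℝ Set.univ g) {x y : ℝ} (hxy : x < y) : slope g x y ≤ rder g y := by
  apply le_csInf ((Set.nonempty_Ioi (a := y)).image _)
  rintro _ ⟨z, hz, rfl⟩
  exact slope_mono3 hg hxy hz

lemma rder_mono (hg : ConvexOn ℝ Set.univ g) : Monotone (rder g) := by
  intro x y hxy
  rcases eq_or_lt_of_le hxy with rfl | h
  · exact le_rfl
  · exact (rder_le_slope hg h).trans (slope_le_rder hg h)

lemma rder_rightCont (hg : ConvexOn ℝ Set.univ g) (hgc : Continuous g) (x : ℝ) :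
    ContinuousWithinAt (rder g) (Set.Ici x) x := by
  rw [← continuousWithinAt_Ioi_iff_Ici]
  have hbdd : BddBelow (rder g '' Set.Ioi x) := by
    refine ⟨rder g x, ?_⟩
    rintro _ ⟨y, hy, rfl⟩
    exact rder_mono hg hy.le
  have key : sInf (rder g '' Set.Ioi x) = rder g x := by
    apply le_antisymm
    · apply le_csInf ((Set.nonempty_Ioi (a := x)).image _)
      rintro _ ⟨z, hz, rfl⟩
      -- show sInf (rder g '' Ioi x) ≤ slope g x z
      have hcont : Filter.Tendsto (fun y => slope g z y) (nhdsWithin x (Set.Ioi x))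
          (nhds (slope g z x)) := by
        have hca : ContinuousAt (fun y => slope g z y) x := by
          simp only [slope_def_field]
          exact ContinuousAt.div ((hgc.continuousAt).sub continuousAt_const)
            (continuousAt_id.sub continuousAt_const) (sub_ne_zero.2 (ne_of_lt hz))
        exact hca.tendsto.mono_left nhdsWithin_le_nhds
      have hev : ∀ᶠ y in nhdsWithin x (Set.Ioi x),
          sInf (rder g '' Set.Ioi x) ≤ slope g z y := by
        filter_upwards [Ioo_mem_nhdsGT_of_mem (Set.mem_Ico.2 ⟨le_refl x, hz⟩)] with y hy
        calc sInf (rder g '' Set.Ioi x) ≤ rder g y := csInf_le hbdd ⟨y, hy.1, rfl⟩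
          _ ≤ slope g y z := rder_le_slope hg hy.2
          _ = slope g z y := slope_comm g y z
      have := ge_of_tendsto hcont hev
      rwa [slope_comm] at this
    · apply le_csInf ((Set.nonempty_Ioi (a := x)).image _)
      rintro _ ⟨y, hy, rfl⟩
      exact rder_mono hg hy.le
  have htend := (rder_mono hg).tendsto_nhdsGT x
  rw [key] at htend
  exact htend

lemma rder_ftc (hg : ConvexOn ℝ Set.univ g) (hgc : Continuous g) (x : ℝ) :
    ∫ t in (0:ℝ)..x, rder g t = g x - g 0 :=
  intervalIntegral.integral_eq_sub_of_hasDeriv_right hgc.continuousOn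
    (fun t _ => hasRightDeriv hg t) (rder_mono hg).intervalIntegrable

end rder

lemma pVarOn_sub_monotone_lt_top {p q : ℝ → ℝ} (hp : Monotone p) (hq : Monotone q)
    {a b : ℝ} : pVarOn 1 (fun x => p x - q x) a b < ⊤ := by
  have hle : pVarOn 1 (fun x => p x - q x) a b
      ≤ ENNReal.ofReal ((p b - p a) + (q b - q a)) := by
    rw [pVarOn]
    refine iSup_le fun n => iSup_le fun u => iSup_le fun hu => iSup_le fun hmem => ?_
    have h11 : (1:ℝ) / 1 = 1 := by norm_num
    rw [h11, ENNReal.rpow_one]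
    have hterm : ∀ k ∈ Finset.range n,
        (ENNReal.ofReal |(p (u (k + 1)) - q (u (k + 1))) - (p (u k) - q (u k))|) ^ (1:ℝ)
        ≤ ENNReal.ofReal ((p (u (k + 1)) - p (u k)) + (q (u (k + 1)) - q (u k))) := by
      intro k hk
      rw [ENNReal.rpow_one]
      apply ENNReal.ofReal_le_ofReal
      have h1 : u k ≤ u (k + 1) := (hu k (Finset.mem_range.1 hk)).le
      have hpk : 0 ≤ p (u (k + 1)) - p (u k) := sub_nonneg.2 (hp h1)
      have hqk : 0 ≤ q (u (k + 1)) - q (u k) := sub_nonneg.2 (hq h1)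
      rw [abs_le]
      constructor <;> linarith
    calc ∑ k ∈ Finset.range n,
          (ENNReal.ofReal |(p (u (k + 1)) - q (u (k + 1))) - (p (u k) - q (u k))|) ^ (1:ℝ)
        ≤ ∑ k ∈ Finset.range n,
          ENNReal.ofReal ((p (u (k + 1)) - p (u k)) + (q (u (k + 1)) - q (u k))) :=
          Finset.sum_le_sum hterm
      _ = ENNReal.ofReal (∑ k ∈ Finset.range n,
          ((p (u (k + 1)) - p (u k)) + (q (u (k + 1)) - q (u k)))) := by
          rw [ENNReal.ofReal_sum_of_nonneg]
          intro k hk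
          have h1 : u k ≤ u (k + 1) := (hu k (Finset.mem_range.1 hk)).le
          have := hp h1
          have := hq h1
          linarith
      _ ≤ ENNReal.ofReal ((p b - p a) + (q b - q a)) := by
          apply ENNReal.ofReal_le_ofReal
          have hsum : ∑ k ∈ Finset.range n,
              ((p (u (k + 1)) - p (u k)) + (q (u (k + 1)) - q (u k)))
              = (p (u n) + q (u n)) - (p (u 0) + q (u 0)) := by
            rw [← Finset.sum_range_sub (fun i => p (u i) + q (u i)) n]
            exact Finset.sum_congr rfl fun i _ => by ring
          rw [hsum]
          have h0 := hmem 0 (Nat.zero_le n)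
          have hn := hmem n le_rfl
          have := hp h0.1
          have := hp hn.2
          have := hq h0.1
          have := hq hn.2
          linarith
  exact lt_of_le_of_lt hle ENNReal.ofReal_lt_top

/-- `f : ℝ → ℝ` is (locally) absolutely continuous with a right-continuous Radon–Nikodym
derivative `f'` of locally bounded variation if and only if `f` is the difference of
two convex functions. -/
theorem absolutelyContinuous_rightCont_bv_iff_diff_convex (f : ℝ → ℝ) :
    (∃ f' : ℝ → ℝ,
        LocallyIntegrable f' ∧
        (∀ x : ℝ, ContinuousWithinAt f' (Set.Ici x) x) ∧
        (∀ a b : ℝ, a < b → pVarOn 1 f' a b < ⊤) ∧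
        (∀ x : ℝ, f x = f 0 + ∫ y in (0 : ℝ)..x, f' y)) ↔
    (∃ g h : ℝ → ℝ, ConvexOn ℝ Set.univ g ∧ ConvexOn ℝ Set.univ h ∧ f = g - h) := by
  constructor
  · rintro ⟨f', _hint, _hrc, hbv, hftc⟩
    have lbv : LocallyBoundedVariationOn f' Set.univ := lbv_of_pVar hbv
    obtain ⟨p, q, hp, hq, hpq⟩ := lbv.exists_monotoneOn_sub_monotoneOn
    replace hp : Monotone p := monotoneOn_univ.1 hp
    replace hq : Monotone q := monotoneOn_univ.1 hq
    refine ⟨fun x => f 0 + ∫ t in (0:ℝ)..x, p t, fun x => ∫ t in (0:ℝ)..x, q t,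
      ?_, convexOn_integral_of_monotone hq, ?_⟩
    · exact (convexOn_const (f 0) convex_univ).add (convexOn_integral_of_monotone hp)
    · funext x
      have hx := hftc x
      have hsub : ∫ y in (0:ℝ)..x, f' y
          = (∫ t in (0:ℝ)..x, p t) - ∫ t in (0:ℝ)..x, q t := by
        have : ∀ y : ℝ, f' y = p y - q y := fun y => by rw [hpq]; rfl
        rw [intervalIntegral.integral_congr (g := fun y => p y - q y) (fun y _ => this y)]
        exact intervalIntegral.integral_sub hp.intervalIntegrable hq.intervalIntegrable
      simp only [Pi.sub_apply]
      rw [hx, hsub]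
      ring
  · rintro ⟨g, h, hg, hh, rfl⟩
    have hgc : Continuous g := continuousOn_univ.1 (hg.continuousOn isOpen_univ)
    have hhc : Continuous h := continuousOn_univ.1 (hh.continuousOn isOpen_univ)
    refine ⟨fun x => rder g x - rder h x, ?_, ?_, ?_, ?_⟩
    · exact ((rder_mono hg).locallyIntegrable).sub ((rder_mono hh).locallyIntegrable)
    · exact fun x => (rder_rightCont hg hgc x).sub (rder_rightCont hh hhc x)
    · exact fun a b _ => pVarOn_sub_monotone_lt_top (rder_mono hg) (rder_mono hh)
    · intro x
      have h1 : ∫ t in (0:ℝ)..x, (rder g t - rder h t)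
          = (g x - g 0) - (h x - h 0) := by
        rw [intervalIntegral.integral_sub (rder_mono hg).intervalIntegrable
          (rder_mono hh).intervalIntegrable, rder_ftc hg hgc x, rder_ftc hh hhc x]
      simp only [Pi.sub_apply]
      rw [h1]
      ring
end

section
/- Let λ > 0, K > 0, and consider the repeated buy-low/sell-high strategy on an interval [u, u+δ] ⊂ (−K, K): starting with capital 1, each time the path S hits u buy (current wealth)/(2K) shares and sell when S hits u+δ (stopping if S hits −K). If the continuous path ω satisfies sup_{t∈[0,T]}|ω(t)| < K and completes at least m upcrossings of [u, u+δ] by time T without hitting −K, then the resulting wealth after the m-th upcrossing is at least (1 + δ/(2K))^m, and the wealth process never goes below 0 (the strategy is 1-admissible). -/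
open Set

/-- The repeated buy-low/sell-high strategy on `[u, u+δ] ⊂ (-K, K)`: starting with
capital `1`, each time the path `ω` hits `u` we buy `wealth/(2K)` shares and sell when
`ω` hits `u + δ`.  If `sup_{[0,T]} |ω| < K` and `ω` completes `m` upcrossings of
`[u, u+δ]` by time `T` (with upcrossing times `a_0 < b_0 < a_1 < b_1 < …`), then the
wealth process `W` satisfies `W ≥ (1 + δ/(2K))^m` after the `m`-th upcrossing and
stays nonnegative throughout (the strategy is 1-admissible). -/
theorem buy_low_sell_high_wealth
    (ω : ℝ → ℝ) (hω : Continuous ω)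
    (T K δ u : ℝ) (hT : 0 < T) (hK : 0 < K) (hδ : 0 < δ)
    (hu : -K < u) (huδ : u + δ < K)
    (m : ℕ) (hm : 1 ≤ m)
    (a b : ℕ → ℝ) (W : ℝ → ℝ)
    (ha0 : 0 ≤ a 0)
    (hab : ∀ i < m, a i < b i)
    (hba : ∀ i, i + 1 < m → b i < a (i + 1))
    (hhit : ∀ i < m, ω (a i) = u ∧ ω (b i) = u + δ)
    (hbT : b (m - 1) ≤ T)
    (hbound : ∀ t ∈ Set.Icc (0 : ℝ) T, |ω t| < K)
    -- the wealth process of the strategy: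
    (hW0 : ∀ t ∈ Set.Icc 0 (a 0), W t = 1)
    (hWin : ∀ i < m, ∀ t ∈ Set.Icc (a i) (b i),
      W t = W (a i) * (1 + (ω t - u) / (2 * K)))
    (hWout : ∀ i, i + 1 < m → ∀ t ∈ Set.Icc (b i) (a (i + 1)), W t = W (b i)) :
    W (b (m - 1)) ≥ (1 + δ / (2 * K)) ^ m ∧
    ∀ t ∈ Set.Icc 0 (b (m - 1)), 0 ≤ W t := by
  classical
  set r : ℝ := 1 + δ / (2 * K) with hr_def
  have h2K : (0 : ℝ) < 2 * K := by linarith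
  have hr1 : (1 : ℝ) ≤ r := by
    have : 0 < δ / (2 * K) := div_pos hδ h2K
    simp only [hr_def]; linarith
  have hr0 : (0 : ℝ) < r := lt_of_lt_of_le one_pos hr1
  -- nonnegativity of each a i
  have h0a : ∀ i, i < m → 0 ≤ a i := by
    intro i
    induction i with
    | zero => intro _; exact ha0
    | succ n ih =>
      intro h
      have h1 := hba n h
      have h2 := hab n (Nat.lt_of_succ_lt h)
      have h3 := ih (Nat.lt_of_succ_lt h)
      linarith
  -- monotonicity of b
  have hbmono : ∀ j, j < m → ∀ i ≤ j, b i ≤ b j := by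
    intro j
    induction j with
    | zero => intro _ i hi; interval_cases i; exact le_refl _
    | succ n ih =>
      intro h i hi
      rcases Nat.lt_succ_iff_lt_or_eq.mp (Nat.lt_succ_of_le hi) with h' | h'
      · have h1 := ih (Nat.lt_of_succ_lt h) i (Nat.lt_succ_iff.mp h')
        have h2 := hba n h
        have h3 := hab (n + 1) h
        linarith
      · rw [h']
  have hmm : m - 1 < m := Nat.sub_lt (lt_of_lt_of_le one_pos hm) one_pos
  -- key wealth values
  have key : ∀ i, i < m → W (a i) = r ^ i ∧ W (b i) = r ^ (i + 1) := by
    intro i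
    induction i with
    | zero =>
      intro h
      have hWa0 : W (a 0) = 1 := hW0 (a 0) ⟨ha0, le_refl _⟩
      refine ⟨by simpa using hWa0, ?_⟩
      have := hWin 0 h (b 0) ⟨(hab 0 h).le, le_refl _⟩
      rw [this, hWa0, (hhit 0 h).2]
      field_simp [hr_def]
      rw [hr_def, zero_add, pow_one, mul_add, mul_div_assoc', mul_div_cancel_left₀ _ h2K.ne']; ring
    | succ n ih =>
      intro h
      have hn : n < m := Nat.lt_of_succ_lt h
      obtain ⟨_, hbn⟩ := ih hn
      have hWa : W (a (n + 1)) = r ^ (n + 1) := by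
        have := hWout n h (a (n + 1)) ⟨(hba n h).le, le_refl _⟩
        rw [this, hbn]
      refine ⟨hWa, ?_⟩
      have := hWin (n + 1) h (b (n + 1)) ⟨(hab (n + 1) h).le, le_refl _⟩
      rw [this, hWa, (hhit (n + 1) h).2]
      have : 1 + (u + δ - u) / (2 * K) = r := by rw [hr_def]; ring_nf
      rw [this, ← pow_succ]
  constructor
  · have := (key (m - 1) hmm).2
    rw [Nat.sub_add_cancel hm] at this
    exact ge_of_eq this
  · intro t ht
    obtain ⟨ht0, htb⟩ := ht
    have htT : t ≤ T := le_trans htb hbT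
    by_cases h0 : t ≤ a 0
    · rw [hW0 t ⟨ht0, h0⟩]; exact zero_le_one
    · push_neg at h0
      set P : ℕ → Prop := fun i => a i ≤ t with hP
      set i := Nat.findGreatest P (m - 1) with hi_def
      have him : i ≤ m - 1 := Nat.findGreatest_le _
      have him' : i < m := lt_of_le_of_lt him hmm
      have hPi : P i := Nat.findGreatest_spec (Nat.zero_le _) h0.le
      have hait : a i ≤ t := hPi
      by_cases hbt : t ≤ b i
      · -- t in the holding interval [a i, b i]
        rw [hWin i him' t ⟨hait, hbt⟩, (key i him').1]
        have hbd := hbound t ⟨ht0, htT⟩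
        have hωt : -K < ω t := (abs_lt.mp hbd).1
        have hfac : 0 ≤ 1 + (ω t - u) / (2 * K) := by
          have : -1 ≤ (ω t - u) / (2 * K) := by
            rw [le_div_iff₀ h2K]; linarith
          linarith
        exact mul_nonneg (pow_nonneg hr0.le i) hfac
      · push_neg at hbt
        by_cases hsucc : i + 1 < m
        · have hnot : ¬ P (i + 1) :=
            Nat.findGreatest_is_greatest (Nat.lt_succ_self i) (by omega)
          have : t < a (i + 1) := lt_of_not_ge hnot
          rw [hWout i hsucc t ⟨hbt.le, this.le⟩, (key i him').2]
          exact pow_nonneg hr0.le _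
        · have : i = m - 1 := by omega
          rw [this] at hbt
          linarith
end
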